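/- arXiv:2303.11719 — 6 statements merged into one kernel-verified Lean document; each statement's English description precedes it below -/
import Mathlib

section
/- Let T be a tournament on 2k+1 vertices and let X be a set of at most (2/3)k vertices such that each x ∈ X satisfies d^+(x) = d^-(x) = k. Then there exists a k-arc-strong tournament T' on the same vertex set such that every edge with at least one endpoint in X has the same orientation in T and T'. -/
/-- `D` is a tournament. -/
def IsTournament {V : Type*} (D : V → V → Prop) : Prop :=
  (∀ v, ¬ D v v) ∧ ∀ u v : V, u ≠ v → (D u v ↔ ¬ D v u)

/-- Number of arcs of `D` leaving the set `S`. -/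
noncomputable def outCut {V : Type*} (D : V → V → Prop) (S : Set V) : ℕ :=
  {p : V × V | p.1 ∈ S ∧ p.2 ∉ S ∧ D p.1 p.2}.ncard

/-- `D` is `k`-arc-strong. -/
def kArcStrong {V : Type*} (D : V → V → Prop) (k : ℕ) : Prop :=
  ∀ S : Set V, S.Nonempty → S ≠ Set.univ → k ≤ outCut D S

/-- Out-degree of a vertex. -/
noncomputable def outDeg {V : Type*} (D : V → V → Prop) (v : V) : ℕ := {w | D v w}.ncard

/-- In-degree of a vertex. -/
noncomputable def inDeg {V : Type*} (D : V → V → Prop) (v : V) : ℕ := {w | D w v}.ncard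

set_option linter.unusedSectionVars false
set_option linter.unusedVariables false

open Finset
open scoped Classical

noncomputable def odegF {V : Type*} [Fintype V] (D : V → V → Prop) (v : V) : ℕ :=
  (univ.filter (fun w => D v w)).card

lemma outDeg_eq_odegF {V : Type*} [Fintype V] (D : V → V → Prop) (v : V) :
    outDeg D v = odegF D v := by
  have h : {w | D v w} = ↑(univ.filter (fun w => D v w)) := by ext w; simp
  rw [outDeg, h, Set.ncard_coe_finset, odegF]

lemma two_mul_sum_inner {V : Type*} [Fintype V] [DecidableEq V] {D : V → V → Prop}
    (hT : IsTournament D) (S : Finset V) :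
    2 * ∑ w ∈ S, (S.filter (fun y => D w y)).card = S.card * (S.card - 1) := by
  have hcf : ∀ w, (S.filter (fun y => D w y)).card = ∑ y ∈ S, (if D w y then 1 else 0) := by
    intro w; rw [Finset.card_filter]
  have hcomm : ∑ w ∈ S, ∑ y ∈ S, (if D w y then 1 else 0)
      = ∑ w ∈ S, ∑ y ∈ S, (if D y w then 1 else 0) := Finset.sum_comm
  have key : ∀ w ∈ S, ∀ y ∈ S,
      ((if D w y then 1 else 0) + (if D y w then 1 else 0) : ℕ) = if w = y then 0 else 1 := by
    intro w _ y _
    by_cases hwy : w = y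
    · subst hwy; simp [hT.1 w]
    · have h2 := hT.2 w y hwy
      by_cases h1 : D w y
      · have : ¬ D y w := h2.mp h1
        simp [h1, this, hwy]
      · have : D y w := by
          have h3 := hT.2 y w (Ne.symm hwy)
          exact h3.mpr h1
        simp [h1, this, hwy]
  calc 2 * ∑ w ∈ S, (S.filter (fun y => D w y)).card
      = (∑ w ∈ S, ∑ y ∈ S, (if D w y then 1 else 0))
        + (∑ w ∈ S, ∑ y ∈ S, (if D y w then 1 else 0)) := by
        simp only [hcf]; rw [← hcomm]; ring
    _ = ∑ w ∈ S, ∑ y ∈ S, ((if D w y then 1 else 0) + (if D y w then 1 else 0)) := by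
        rw [← Finset.sum_add_distrib]
        exact Finset.sum_congr rfl (fun w _ => (Finset.sum_add_distrib).symm)
    _ = ∑ w ∈ S, ∑ y ∈ S, (if w = y then 0 else 1) := by
        refine Finset.sum_congr rfl fun w hw => Finset.sum_congr rfl fun y hy => key w hw y hy
    _ = ∑ w ∈ S, (S.card - 1) := by
        refine Finset.sum_congr rfl fun w hw => ?_
        have : ∑ y ∈ S, (if w = y then 0 else 1) = (S.filter (fun y => ¬ (w = y))).card := by
          rw [Finset.card_filter]
          exact Finset.sum_congr rfl fun y _ => by by_cases h : w = y <;> simp [h]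
        rw [this]
        have : S.filter (fun y => ¬ (w = y)) = S.erase w := by
          ext y; simp [Finset.mem_erase, and_comm, eq_comm]
        rw [this, Finset.card_erase_of_mem hw]
    _ = S.card * (S.card - 1) := by rw [Finset.sum_const, smul_eq_mul]


/-- Reverse the arc `(u,w)`. -/
def arcFlip {V : Type*} (D : V → V → Prop) (u w : V) : V → V → Prop :=
  fun a b => (D a b ∧ ¬(a = u ∧ b = w)) ∨ (a = w ∧ b = u)

section FlipFacts
variable {V : Type*} [Fintype V] [DecidableEq V] {D : V → V → Prop} {u w : V}

lemma flip_tournament (hT : IsTournament D) (huw : D u w) : IsTournament (arcFlip D u w) := by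
  have hne : u ≠ w := fun h => hT.1 u (h ▸ huw)
  have hwu : ¬ D w u := (hT.2 u w hne).mp huw
  constructor
  · intro v
    rintro (⟨h, _⟩ | ⟨h1, h2⟩)
    · exact hT.1 v h
    · exact hne (h2.symm.trans h1)
  · intro a b hab
    have h2 := hT.2 a b hab
    constructor
    · rintro (⟨h, hn⟩ | ⟨h1, h2'⟩)
      · rintro (⟨h', hn'⟩ | ⟨h1', h2''⟩)
        · exact (h2.mp h) h'
        · exact hn ⟨h2'', h1'⟩
      · rintro (⟨h', hn'⟩ | ⟨h1', h2''⟩)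
        · exact hn' ⟨h2', h1⟩
        · exact hne (h2''.symm.trans h1)
    · intro hnot
      by_cases hD : D a b
      · by_cases hx : a = u ∧ b = w
        · exfalso; apply hnot; right; exact ⟨hx.2, hx.1⟩
        · exact Or.inl ⟨hD, hx⟩
      · have hba : D b a := (hT.2 b a (Ne.symm hab)).mpr hD
        by_cases hx : b = u ∧ a = w
        · exact Or.inr ⟨hx.2, hx.1⟩
        · exfalso; exact hnot (Or.inl ⟨hba, hx⟩)

lemma flip_apply_of_ne (a b : V) (h1 : ¬(a = u ∧ b = w)) (h2 : ¬(a = w ∧ b = u)) :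
    arcFlip D u w a b ↔ D a b := by
  unfold arcFlip; tauto

lemma odegF_flip_u (hT : IsTournament D) (huw : D u w) :
    odegF (arcFlip D u w) u = odegF D u - 1 := by
  have hne : u ≠ w := fun h => hT.1 u (h ▸ huw)
  have hset : (univ.filter (fun b => arcFlip D u w u b)) = (univ.filter (fun b => D u b)).erase w := by
    ext b
    simp only [Finset.mem_filter, Finset.mem_erase, Finset.mem_univ, true_and]
    constructor
    · rintro (⟨h, hn⟩ | ⟨h1, _⟩)
      · exact ⟨fun hb => hn ⟨rfl, hb⟩, h⟩
      · exact absurd h1 hne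
    · rintro ⟨hbw, h⟩
      exact Or.inl ⟨h, fun hc => hbw hc.2⟩
  rw [odegF, hset, Finset.card_erase_of_mem (by simp [huw]), odegF]

lemma odegF_flip_w (hT : IsTournament D) (huw : D u w) :
    odegF (arcFlip D u w) w = odegF D w + 1 := by
  have hne : u ≠ w := fun h => hT.1 u (h ▸ huw)
  have hwu : ¬ D w u := (hT.2 u w hne).mp huw
  have hset : (univ.filter (fun b => arcFlip D u w w b))
      = insert u (univ.filter (fun b => D w b)) := by
    ext b
    simp only [Finset.mem_filter, Finset.mem_insert, Finset.mem_univ, true_and]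
    constructor
    · rintro (⟨h, _⟩ | ⟨_, h2⟩)
      · exact Or.inr h
      · exact Or.inl h2
    · rintro (rfl | h)
      · exact Or.inr ⟨rfl, rfl⟩
      · exact Or.inl ⟨h, fun hc => hne hc.1.symm⟩
  rw [odegF, hset, Finset.card_insert_of_notMem (by simp [hwu]), odegF]

lemma odegF_flip_other (hT : IsTournament D) (huw : D u w) {a : V} (hau : a ≠ u) (haw : a ≠ w) :
    odegF (arcFlip D u w) a = odegF D a := by
  unfold odegF
  congr 1
  ext b
  simp only [Finset.mem_filter, Finset.mem_univ, true_and]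
  rw [flip_apply_of_ne a b (fun hc => hau hc.1) (fun hc => haw hc.1)]

end FlipFacts

noncomputable def Phi {V : Type*} [Fintype V] (k : ℕ) (D : V → V → Prop) : ℕ :=
  ∑ v, ((odegF D v : ℤ) - k).natAbs

section PhiFacts
variable {V : Type*} [Fintype V] [DecidableEq V] {D : V → V → Prop} {u w : V} {k : ℕ}

lemma phi_split (k : ℕ) (D : V → V → Prop) (hne : u ≠ w) :
    Phi k D = (∑ v ∈ (univ.erase u).erase w, ((odegF D v : ℤ) - k).natAbs)
      + ((odegF D u : ℤ) - k).natAbs + ((odegF D w : ℤ) - k).natAbs := by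
  rw [Phi, ← Finset.sum_erase_add _ _ (Finset.mem_univ u),
    ← Finset.sum_erase_add _ _ (Finset.mem_erase.mpr ⟨Ne.symm hne, Finset.mem_univ w⟩)]
  ring

lemma phi_flip_eq (hT : IsTournament D) (huw : D u w) (hu : k < odegF D u)
    (hw : odegF D w = k) : Phi k (arcFlip D u w) = Phi k D := by
  have hne : u ≠ w := fun h => hT.1 u (h ▸ huw)
  rw [phi_split k D hne, phi_split k (arcFlip D u w) hne]
  have h1 : ∀ v ∈ (univ.erase u).erase w,
      ((odegF (arcFlip D u w) v : ℤ) - k).natAbs = ((odegF D v : ℤ) - k).natAbs := by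
    intro v hv
    simp only [Finset.mem_erase] at hv
    rw [odegF_flip_other hT huw hv.2.1 hv.1]
  rw [Finset.sum_congr rfl h1, odegF_flip_u hT huw, odegF_flip_w hT huw]
  have h2 : 1 ≤ odegF D u := by omega
  have h3 : ((odegF D u - 1 : ℕ) : ℤ) = (odegF D u : ℤ) - 1 := by
    push_cast [Nat.cast_sub h2]; ring
  omega

lemma phi_flip_lt (hT : IsTournament D) (huw : D u w) (hu : k < odegF D u)
    (hw : odegF D w < k) : Phi k (arcFlip D u w) < Phi k D := by
  have hne : u ≠ w := fun h => hT.1 u (h ▸ huw)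
  rw [phi_split k D hne, phi_split k (arcFlip D u w) hne]
  have h1 : ∀ v ∈ (univ.erase u).erase w,
      ((odegF (arcFlip D u w) v : ℤ) - k).natAbs = ((odegF D v : ℤ) - k).natAbs := by
    intro v hv
    simp only [Finset.mem_erase] at hv
    rw [odegF_flip_other hT huw hv.2.1 hv.1]
  rw [Finset.sum_congr rfl h1, odegF_flip_u hT huw, odegF_flip_w hT huw]
  have h2 : 1 ≤ odegF D u := by omega
  have h3 : ((odegF D u - 1 : ℕ) : ℤ) = (odegF D u : ℤ) - 1 := by
    push_cast [Nat.cast_sub h2]; ring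
  omega

end PhiFacts

/-- `n`-step reachability. -/
def ReachN {V : Type*} (r : V → V → Prop) : ℕ → V → V → Prop
  | 0, u, v => u = v
  | n+1, u, v => ∃ w, r u w ∧ ReachN r n w v

lemma ReachN_tail {V : Type*} {r : V → V → Prop} :
    ∀ {n u v z}, ReachN r n u v → r v z → ReachN r (n+1) u z := by
  intro n
  induction n with
  | zero => intro u v z h hr; cases h; exact ⟨z, hr, rfl⟩
  | succ n IH =>
    rintro u v z ⟨w, hw, hwv⟩ hr
    exact ⟨w, hw, IH hwv hr⟩

lemma reach_avoid {V : Type*} {r r' : V → V → Prop} {u w : V}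
    (h' : ∀ a b, r a b → (a = u ∧ b = w) ∨ r' a b) :
    ∀ n a v, ReachN r n a v → ∃ m, m ≤ n ∧ (ReachN r' m a v ∨ ReachN r' m w v) := by
  intro n
  induction n with
  | zero => intro a v h; exact ⟨0, le_refl 0, Or.inl h⟩
  | succ n IH =>
    rintro a v ⟨b, hab, hbv⟩
    obtain ⟨m, hm, hcase⟩ := IH b v hbv
    rcases h' a b hab with ⟨rfl, rfl⟩ | hr
    · rcases hcase with h | h
      · exact ⟨m, le_trans hm (Nat.le_succ n), Or.inr h⟩
      · exact ⟨m, le_trans hm (Nat.le_succ n), Or.inr h⟩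
    · rcases hcase with h | h
      · exact ⟨m+1, Nat.succ_le_succ hm, Or.inl ⟨b, hr, h⟩⟩
      · exact ⟨m, le_trans hm (Nat.le_succ n), Or.inr h⟩

/-- The step relation: an arc avoiding `X`. -/
def stepR {V : Type*} (X : Set V) (D : V → V → Prop) (a b : V) : Prop :=
  a ∉ X ∧ b ∉ X ∧ D a b

lemma dec_main {V : Type*} [Fintype V] [DecidableEq V] (X : Set V) (T : V → V → Prop) (k : ℕ) :
    ∀ n (D : V → V → Prop), IsTournament D → (∀ a b, (a ∈ X ∨ b ∈ X) → (T a b ↔ D a b)) →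
    ∀ u v, u ∉ X → v ∉ X → k < odegF D u → odegF D v < k →
    ReachN (stepR X D) n u v →
    ∃ D', IsTournament D' ∧ (∀ a b, (a ∈ X ∨ b ∈ X) → (T a b ↔ D' a b)) ∧
      Phi k D' < Phi k D := by
  intro n
  induction n using Nat.strong_induction_on with
  | _ n IH =>
    intro D hD hA u v hu hv hdu hdv hreach
    match n, hreach with
    | 0, hreach =>
      have : u = v := hreach
      subst this; omega
    | Nat.succ m, ⟨w, ⟨hu', hw, hDuw⟩, hrest⟩ =>
      have hne : u ≠ w := fun h => hD.1 u (h ▸ hDuw)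
      have hagree_flip : ∀ a b, (a ∈ X ∨ b ∈ X) → (T a b ↔ arcFlip D u w a b) := by
        intro a b hab
        rw [hA a b hab]
        rw [flip_apply_of_ne a b]
        · rintro ⟨rfl, rfl⟩; rcases hab with h | h; exact hu h; exact hw h
        · rintro ⟨rfl, rfl⟩; rcases hab with h | h; exact hw h; exact hu h
      rcases lt_trichotomy (odegF D w) k with hlt | heq | hgt
      · exact ⟨arcFlip D u w, flip_tournament hD hDuw, hagree_flip,
          phi_flip_lt hD hDuw hdu hlt⟩
      · -- equal case: flip and continue
        set D2 := arcFlip D u w with hD2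
        have hT2 : IsTournament D2 := flip_tournament hD hDuw
        have hphi : Phi k D2 = Phi k D := phi_flip_eq hD hDuw hdu heq
        have hvu : v ≠ u := fun h => by rw [h] at hdv; omega
        have hvw : v ≠ w := fun h => by rw [h] at hdv; omega
        have hdw2 : k < odegF D2 w := by
          rw [hD2, odegF_flip_w hD hDuw]; omega
        have hdv2 : odegF D2 v < k := by
          rw [hD2, odegF_flip_other hD hDuw hvu hvw]; exact hdv
        have hstep : ∀ a b, stepR X D a b → (a = u ∧ b = w) ∨ stepR X D2 a b := by
          rintro a b ⟨ha, hb, hab⟩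
          by_cases hcase : a = u ∧ b = w
          · exact Or.inl hcase
          · right
            refine ⟨ha, hb, ?_⟩
            have hcase2 : ¬ (a = w ∧ b = u) := by
              rintro ⟨h1', h2'⟩
              rw [h1', h2'] at hab
              exact (hD.2 u w hne).mp hDuw hab
            rw [hD2, flip_apply_of_ne a b hcase hcase2]
            exact hab
        obtain ⟨m', hm', hcase⟩ := reach_avoid hstep m w v hrest
        have hreach2 : ReachN (stepR X D2) m' w v := by
          rcases hcase with h | h; exact h; exact h
        obtain ⟨D', h1, h2, h3⟩ := IH m' (Nat.lt_succ_of_le hm') D2 hT2 hagree_flip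
          w v hw hv hdw2 hdv2 hreach2
        exact ⟨D', h1, h2, by omega⟩
      · exact IH m (Nat.lt_succ_self m) D hD hA w v hw hv hgt hdv hrest

lemma reach_notX {V : Type*} {X : Set V} {D : V → V → Prop} :
    ∀ n u y, ReachN (stepR X D) n u y → u ∉ X → y ∉ X := by
  intro n
  induction n with
  | zero => intro u y h hu; exact h ▸ hu
  | succ n IH => rintro u y ⟨w, ⟨_, hwX, _⟩, hrest⟩ hu; exact IH w y hrest hwX

lemma sum_odegF_univ {V : Type*} [Fintype V] [DecidableEq V] {k : ℕ}
    (hcard : Fintype.card V = 2 * k + 1) {D : V → V → Prop} (hD : IsTournament D) :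
    ∑ v, odegF D v = k * (2 * k + 1) := by
  have h := two_mul_sum_inner hD (univ : Finset V)
  rw [Finset.card_univ, hcard] at h
  have h2 : ∑ v, odegF D v = ∑ w : V, (univ.filter (fun y => D w y)).card := rfl
  have h3 : (2 * k + 1) * (2 * k + 1 - 1) = 2 * (k * (2 * k + 1)) := by
    rw [Nat.add_sub_cancel]; ring
  omega

lemma exists_pair {V : Type*} [Fintype V] [DecidableEq V] (X : Set V) (k : ℕ)
    (hcard : Fintype.card V = 2 * k + 1)
    (D : V → V → Prop) (hD : IsTournament D)
    (hXcard : 3 * (univ.filter (· ∈ X)).card ≤ 2 * k)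
    (hXdeg : ∀ x ∈ X, odegF D x = k)
    (v0 : V) (h0 : odegF D v0 ≠ k) :
    ∃ u v n, u ∉ X ∧ v ∉ X ∧ k < odegF D u ∧ odegF D v < k ∧
      ReachN (stepR X D) n u v := by
  have hsum := sum_odegF_univ hcard hD
  -- Step B : get a vertex of large degree and one of small degree
  have hBig : ∃ u, k < odegF D u := by
    by_contra hno
    push_neg at hno
    have hlt : ∃ v, odegF D v < k := by
      rcases Nat.lt_or_ge (odegF D v0) k with h | h
      · exact ⟨v0, h⟩
      · exact absurd (le_antisymm (hno v0) h) h0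
    obtain ⟨v1, hv1⟩ := hlt
    have : ∑ v, odegF D v < ∑ _v : V, k :=
      Finset.sum_lt_sum (fun i _ => hno i) ⟨v1, Finset.mem_univ v1, hv1⟩
    rw [Finset.sum_const, Finset.card_univ, hcard, smul_eq_mul] at this
    have heq : (2 * k + 1) * k = k * (2 * k + 1) := by ring
    omega
  have hSmall : ∃ v, odegF D v < k := by
    by_contra hno
    push_neg at hno
    have hgt : ∃ u, k < odegF D u := by
      rcases Nat.lt_or_ge k (odegF D v0) with h | h
      · exact ⟨v0, h⟩
      · exact absurd (le_antisymm h (hno v0)) h0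
    obtain ⟨u1, hu1⟩ := hgt
    have : ∑ _v : V, k < ∑ v, odegF D v :=
      Finset.sum_lt_sum (fun i _ => hno i) ⟨u1, Finset.mem_univ u1, hu1⟩
    rw [Finset.sum_const, Finset.card_univ, hcard, smul_eq_mul] at this
    have heq : (2 * k + 1) * k = k * (2 * k + 1) := by ring
    omega
  obtain ⟨u0, hu0⟩ := hBig
  obtain ⟨w0, hw0⟩ := hSmall
  have hu0X : u0 ∉ X := fun h => by rw [hXdeg u0 h] at hu0; omega
  have hw0X : w0 ∉ X := fun h => by rw [hXdeg w0 h] at hw0; omega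
  by_contra hcon
  -- the reachable set R
  set R : Finset V := univ.filter
    (fun y => ∃ u n, u ∉ X ∧ k < odegF D u ∧ ReachN (stepR X D) n u y) with hR
  set Xf : Finset V := univ.filter (· ∈ X) with hXf
  set Q : Finset V := univ.filter (fun z => z ∉ X ∧ z ∉ R) with hQ
  have hu0R : u0 ∈ R := by
    rw [hR]; simp only [Finset.mem_filter, Finset.mem_univ, true_and]
    exact ⟨u0, 0, hu0X, hu0, rfl⟩
  have hRX : ∀ y ∈ R, y ∉ X := by
    intro y hy
    rw [hR] at hy; simp only [Finset.mem_filter, Finset.mem_univ, true_and] at hy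
    obtain ⟨u, n, huX, _, hreach⟩ := hy
    exact reach_notX n u y hreach huX
  have hRdeg : ∀ y ∈ R, k ≤ odegF D y := by
    intro y hy
    by_contra hlt
    push_neg at hlt
    have hyR := hy
    rw [hR] at hy; simp only [Finset.mem_filter, Finset.mem_univ, true_and] at hy
    obtain ⟨u, n, huX, hku, hreach⟩ := hy
    exact hcon ⟨u, y, n, huX, hRX y hyR, hku, hlt, hreach⟩
  have hRclosed : ∀ y ∈ R, ∀ z, z ∉ X → D y z → z ∈ R := by
    intro y hy z hzX hyz
    have hyX := hRX y hy
    rw [hR] at hy ⊢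
    simp only [Finset.mem_filter, Finset.mem_univ, true_and] at hy ⊢
    obtain ⟨u, n, huX, hku, hreach⟩ := hy
    exact ⟨u, n + 1, huX, hku, ReachN_tail hreach ⟨hyX, hzX, hyz⟩⟩
  have hQdeg : ∀ z ∈ Q, odegF D z ≤ k := by
    intro z hz
    rw [hQ] at hz; simp only [Finset.mem_filter, Finset.mem_univ, true_and] at hz
    by_contra hgt
    push_neg at hgt
    apply hz.2
    rw [hR]; simp only [Finset.mem_filter, Finset.mem_univ, true_and]
    exact ⟨z, 0, hz.1, hgt, rfl⟩
  have hw0Q : w0 ∈ Q := by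
    rw [hQ]; simp only [Finset.mem_filter, Finset.mem_univ, true_and]
    refine ⟨hw0X, fun hmem => ?_⟩
    rw [hR] at hmem; simp only [Finset.mem_filter, Finset.mem_univ, true_and] at hmem
    obtain ⟨u, n, huX, hku, hreach⟩ := hmem
    exact hcon ⟨u, w0, n, huX, hw0X, hku, hw0, hreach⟩
  have hback : ∀ z ∈ Q, ∀ y ∈ R, D z y := by
    intro z hz y hy
    have hzQ := hz
    rw [hQ] at hz; simp only [Finset.mem_filter, Finset.mem_univ, true_and] at hz
    have hzy : ¬ D y z := fun h => hz.2 (hRclosed y hy z hz.1 h)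
    have hne : z ≠ y := by rintro rfl; exact hz.2 hy
    exact (hD.2 z y hne).mpr hzy
  -- partition of univ
  have hdisjRX : Disjoint R Xf := by
    rw [Finset.disjoint_left]
    intro a ha haX
    rw [hXf] at haX; simp only [Finset.mem_filter, Finset.mem_univ, true_and] at haX
    exact hRX a ha haX
  have hdisjRQ : Disjoint R Q := by
    rw [Finset.disjoint_left]
    intro a ha haQ
    rw [hQ] at haQ; simp only [Finset.mem_filter, Finset.mem_univ, true_and] at haQ
    exact haQ.2 ha
  have hdisjXQ : Disjoint Xf Q := by
    rw [Finset.disjoint_left]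
    intro a ha haQ
    rw [hXf] at ha; simp only [Finset.mem_filter, Finset.mem_univ, true_and] at ha
    rw [hQ] at haQ; simp only [Finset.mem_filter, Finset.mem_univ, true_and] at haQ
    exact haQ.1 ha
  have hunion : R ∪ Xf ∪ Q = univ := by
    ext a
    simp only [Finset.mem_union, Finset.mem_univ, iff_true, hXf, hQ,
      Finset.mem_filter, Finset.mem_univ, true_and]
    by_cases h1 : a ∈ R
    · exact Or.inl (Or.inl h1)
    · by_cases h2 : a ∈ X
      · exact Or.inl (Or.inr h2)
      · exact Or.inr ⟨h2, h1⟩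
  have hpart : ∀ p : V → Prop, (univ.filter p).card
      = (R.filter p).card + (Xf.filter p).card + (Q.filter p).card := by
    intro p
    have d1 : Disjoint (R.filter p) (Xf.filter p) := Finset.disjoint_filter_filter hdisjRX
    have d2 : Disjoint ((R ∪ Xf).filter p) (Q.filter p) :=
      Finset.disjoint_filter_filter (Finset.disjoint_union_left.mpr ⟨hdisjRQ, hdisjXQ⟩)
    rw [← hunion, Finset.filter_union, Finset.card_union_of_disjoint d2,
      Finset.filter_union, Finset.card_union_of_disjoint d1]
  have hcards : R.card + Xf.card + Q.card = 2 * k + 1 := by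
    have := hpart (fun _ => True)
    simp only [Finset.filter_true] at this
    rw [Finset.card_univ, hcard] at this
    omega
  -- sum inequality over R
  have hS1lower : k * R.card + 1 ≤ ∑ y ∈ R, odegF D y := by
    have : ∑ _y ∈ R, k < ∑ y ∈ R, odegF D y :=
      Finset.sum_lt_sum (fun i hi => hRdeg i hi) ⟨u0, hu0R, hu0⟩
    rw [Finset.sum_const, smul_eq_mul, mul_comm] at this
    omega
  have hS1upper : ∑ y ∈ R, odegF D y
      ≤ (∑ y ∈ R, (R.filter (fun z => D y z)).card) + R.card * Xf.card := by
    have hbound : ∀ y ∈ R, odegF D y ≤ (R.filter (fun z => D y z)).card + Xf.card := by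
      intro y hy
      have h := hpart (fun z => D y z)
      have hQ0 : (Q.filter (fun z => D y z)).card = 0 := by
        rw [Finset.card_eq_zero, Finset.filter_eq_empty_iff]
        intro z hz hDyz
        have hzX : z ∉ X := by
          rw [hQ] at hz; simp only [Finset.mem_filter, Finset.mem_univ, true_and] at hz
          exact hz.1
        have : z ∈ R := hRclosed y hy z hzX hDyz
        exact (Finset.disjoint_left.mp hdisjRQ) this hz
      have hXb : (Xf.filter (fun z => D y z)).card ≤ Xf.card := Finset.card_filter_le _ _
      rw [odegF] at *
      omega
    calc ∑ y ∈ R, odegF D y ≤ ∑ y ∈ R, ((R.filter (fun z => D y z)).card + Xf.card) :=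
          Finset.sum_le_sum hbound
      _ = (∑ y ∈ R, (R.filter (fun z => D y z)).card) + R.card * Xf.card := by
          rw [Finset.sum_add_distrib, Finset.sum_const, smul_eq_mul]
  have hI1 : 2 * (k * R.card + 1) ≤ R.card * (R.card - 1) + 2 * (R.card * Xf.card) := by
    have h2 := two_mul_sum_inner hD R
    omega
  -- sum inequality over Q
  have hS2upper : ∑ z ∈ Q, odegF D z < k * Q.card := by
    have : ∑ z ∈ Q, odegF D z < ∑ _z ∈ Q, k :=
      Finset.sum_lt_sum (fun i hi => hQdeg i hi) ⟨w0, hw0Q, hw0⟩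
    rw [Finset.sum_const, smul_eq_mul, mul_comm] at this
    omega
  have hS2lower : Q.card * R.card + (∑ z ∈ Q, (Q.filter (fun y => D z y)).card)
      ≤ ∑ z ∈ Q, odegF D z := by
    have hbound : ∀ z ∈ Q, R.card + (Q.filter (fun y => D z y)).card ≤ odegF D z := by
      intro z hz
      have h := hpart (fun y => D z y)
      have hRfull : (R.filter (fun y => D z y)) = R := by
        apply Finset.filter_true_of_mem
        intro y hy
        exact hback z hz y hy
      rw [odegF] at *
      rw [hRfull] at h
      omega
    calc Q.card * R.card + (∑ z ∈ Q, (Q.filter (fun y => D z y)).card)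
        = ∑ z ∈ Q, (R.card + (Q.filter (fun y => D z y)).card) := by
          rw [Finset.sum_add_distrib, Finset.sum_const, smul_eq_mul]
      _ ≤ ∑ z ∈ Q, odegF D z := Finset.sum_le_sum hbound
  have hI2 : 2 * (Q.card * R.card) + Q.card * (Q.card - 1) < 2 * (k * Q.card) := by
    have h2 := two_mul_sum_inner hD Q
    omega
  -- arithmetic contradiction
  have hr1 : 1 ≤ R.card := Finset.card_pos.mpr ⟨u0, hu0R⟩ 
  have hq1 : 1 ≤ Q.card := Finset.card_pos.mpr ⟨w0, hw0Q⟩ 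
  obtain ⟨q', hq'⟩ : ∃ q', Q.card = q' + 1 := ⟨Q.card - 1, by omega⟩
  obtain ⟨r', hr'⟩ : ∃ r', R.card = r' + 1 := ⟨R.card - 1, by omega⟩
  rw [hq', hr'] at hI2
  rw [hr'] at hI1
  rw [hr', hq'] at hcards
  have hstep1 : (q' + 1) * (2 * (r' + 1) + q') < (q' + 1) * (2 * k) := by
    have : 2 * ((q' + 1) * (r' + 1)) + (q' + 1) * (q' + 1 - 1)
        = (q' + 1) * (2 * (r' + 1) + q') := by
      rw [Nat.add_sub_cancel]; ring
    have heq2 : 2 * (k * (q' + 1)) = (q' + 1) * (2 * k) := by ring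
    omega
  have hstep2 : 2 * (r' + 1) + q' < 2 * k := Nat.lt_of_mul_lt_mul_left hstep1
  -- hence R.card < Xf.card
  have hrx : r' + 1 + 1 ≤ Xf.card := by omega
  -- final contradiction from hI1
  have hI1' : 2 * (k * (r' + 1)) + 2 ≤ (r' + 1) * r' + 2 * ((r' + 1) * Xf.card) := by
    have : (r' + 1) * (r' + 1 - 1) = (r' + 1) * r' := by rw [Nat.add_sub_cancel]
    omega
  have hkey : ((r' : ℤ) + 1) * ((Xf.card : ℤ) - r' - 2) ≥ 0 :=
    mul_nonneg (by positivity) (by omega)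
  have hkey2 : ((r' : ℤ) + 1) * (2 * k - 3 * Xf.card) ≥ 0 :=
    mul_nonneg (by positivity) (by omega)
  have hI1z : (2 * (k * ((r' : ℤ) + 1)) + 2 : ℤ) ≤ (r' + 1) * r' + 2 * ((r' + 1) * Xf.card) := by
    exact_mod_cast hI1'
  nlinarith [hkey, hkey2, hI1z]

lemma repair {V : Type*} [Fintype V] [DecidableEq V] (X : Set V) (T : V → V → Prop) (k : ℕ)
    (hcard : Fintype.card V = 2 * k + 1)
    (hXcard : 3 * (univ.filter (· ∈ X)).card ≤ 2 * k)
    (hTdeg : ∀ x ∈ X, odegF T x = k) :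
    ∀ φ (D : V → V → Prop), IsTournament D → (∀ a b, (a ∈ X ∨ b ∈ X) → (T a b ↔ D a b)) →
    Phi k D ≤ φ →
    ∃ D', IsTournament D' ∧ (∀ a b, (a ∈ X ∨ b ∈ X) → (T a b ↔ D' a b)) ∧
      ∀ v, odegF D' v = k := by
  intro φ
  induction φ with
  | zero =>
    intro D h1 h2 h3
    refine ⟨D, h1, h2, fun v => ?_⟩
    have h0 : Phi k D = 0 := Nat.le_zero.mp h3
    rw [Phi] at h0
    have := (Finset.sum_eq_zero_iff.mp h0) v (Finset.mem_univ v)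
    omega
  | succ φ IH =>
    intro D h1 h2 h3
    by_cases hall : ∀ v, odegF D v = k
    · exact ⟨D, h1, h2, hall⟩
    · push_neg at hall
      obtain ⟨v0, hv0⟩ := hall
      have hXdegD : ∀ x ∈ X, odegF D x = k := by
        intro x hx
        have hss : (univ.filter (fun w => D x w)) = (univ.filter (fun w => T x w)) := by
          ext w
          simp only [Finset.mem_filter, Finset.mem_univ, true_and]
          exact (h2 x w (Or.inl hx)).symm
        rw [odegF, hss]
        exact hTdeg x hx
      obtain ⟨u, v, n, huX, hvX, hdu, hdv, hreach⟩ :=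
        exists_pair X k hcard D h1 hXcard hXdegD v0 hv0
      obtain ⟨D', hD'1, hD'2, hlt⟩ :=
        dec_main X T k n D h1 h2 u v huX hvX hdu hdv hreach
      exact IH D' hD'1 hD'2 (by omega)

lemma eulerian_cut {V : Type*} [Fintype V] [DecidableEq V] (k : ℕ)
    (hcard : Fintype.card V = 2 * k + 1)
    (D : V → V → Prop) (hD : IsTournament D) (hdeg : ∀ v, odegF D v = k)
    (S : Set V) (hS : S.Nonempty) (hSuniv : S ≠ Set.univ) :
    k ≤ outCut D S := by
  classical
  set Sf : Finset V := univ.filter (· ∈ S) with hSf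
  have hset : {p : V × V | p.1 ∈ S ∧ p.2 ∉ S ∧ D p.1 p.2}
      = ↑((univ ×ˢ univ).filter (fun p : V × V => p.1 ∈ S ∧ p.2 ∉ S ∧ D p.1 p.2)) := by
    ext p; simp
  rw [outCut, hset, Set.ncard_coe_finset]
  set P := (univ ×ˢ univ).filter (fun p : V × V => p.1 ∈ S ∧ p.2 ∉ S ∧ D p.1 p.2) with hP
  have hfib : P.card = ∑ u ∈ Sf, (P.filter (fun p => p.1 = u)).card := by
    apply Finset.card_eq_sum_card_fiberwise
    intro p hp
    rw [hP] at hp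
    simp only [Finset.mem_coe, Finset.mem_filter] at hp
    rw [hSf]; simp only [Finset.mem_coe, Finset.mem_filter, Finset.mem_univ, true_and]
    exact hp.2.1
  have hfiber : ∀ u ∈ Sf, (P.filter (fun p => p.1 = u)).card
      = (univ.filter (fun w => w ∉ S ∧ D u w)).card := by
    intro u hu
    rw [hSf] at hu; simp only [Finset.mem_filter, Finset.mem_univ, true_and] at hu
    refine Finset.card_bij' (fun p _ => p.2) (fun w _ => (u, w)) ?_ ?_ ?_ ?_
    · intro p hp
      rw [Finset.mem_filter] at hp
      obtain ⟨hpP, hp1⟩ := hp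
      rw [hP, Finset.mem_filter] at hpP
      obtain ⟨-, hS1, hS2, hS3⟩ := hpP
      rw [Finset.mem_filter]
      exact ⟨Finset.mem_univ _, hS2, hp1 ▸ hS3⟩
    · intro w hw
      rw [Finset.mem_filter] at hw
      obtain ⟨-, hw1, hw2⟩ := hw
      rw [Finset.mem_filter]
      refine ⟨?_, rfl⟩
      rw [hP, Finset.mem_filter]
      exact ⟨Finset.mem_product.mpr ⟨Finset.mem_univ _, Finset.mem_univ _⟩, hu, hw1, hw2⟩
    · intro p hp
      rw [Finset.mem_filter] at hp
      exact Prod.ext hp.2.symm rfl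
    · intro w _
      rfl
  have hsplit : ∀ u : V, odegF D u
      = (Sf.filter (fun w => D u w)).card + (univ.filter (fun w => w ∉ S ∧ D u w)).card := by
    intro u
    have := Finset.card_filter_add_card_filter_not
      (s := univ.filter (fun w => D u w)) (p := fun w => w ∈ S)
    rw [Finset.filter_filter, Finset.filter_filter] at this
    have e1 : (univ.filter (fun w => D u w ∧ w ∈ S)) = Sf.filter (fun w => D u w) := by
      rw [hSf, Finset.filter_filter]
      exact Finset.filter_congr (fun w _ => by tauto)
    have e2 : (univ.filter (fun w => D u w ∧ w ∉ S)) = univ.filter (fun w => w ∉ S ∧ D u w) := by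
      exact Finset.filter_congr (fun w _ => by tauto)
    rw [e1, e2] at this
    rw [odegF, ← this]
  have hSfcard1 : 1 ≤ Sf.card := by
    obtain ⟨a, ha⟩ := hS
    refine Finset.card_pos.mpr ⟨a, ?_⟩
    rw [hSf]; simp [ha]
  have hSfcard2 : Sf.card ≤ 2 * k := by
    by_contra hgt
    push_neg at hgt
    have hle : Sf.card ≤ 2 * k + 1 := by
      rw [← hcard, ← Finset.card_univ]; exact Finset.card_le_card (Finset.subset_univ _)
    have hSfeq : Sf = univ := Finset.eq_univ_of_card Sf (by omega)
    apply hSuniv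
    ext a
    simp only [Set.mem_univ, iff_true]
    have : a ∈ Sf := hSfeq ▸ Finset.mem_univ a
    rw [hSf] at this; simp only [Finset.mem_filter, Finset.mem_univ, true_and] at this
    exact this
  -- the degree sum identity
  have hsum : k * Sf.card = (∑ u ∈ Sf, (Sf.filter (fun w => D u w)).card) + P.card := by
    rw [hfib]
    rw [Finset.sum_congr rfl hfiber]
    rw [← Finset.sum_add_distrib]
    have : ∀ u ∈ Sf, (Sf.filter (fun w => D u w)).card
        + (univ.filter (fun w => w ∉ S ∧ D u w)).card = odegF D u :=
      fun u _ => (hsplit u).symm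
    rw [Finset.sum_congr rfl this]
    rw [Finset.sum_congr rfl (fun u _ => hdeg u), Finset.sum_const, smul_eq_mul, mul_comm]
  have hinner := two_mul_sum_inner hD Sf
  -- finish by arithmetic
  obtain ⟨s', hs'⟩ : ∃ s', Sf.card = s' + 1 := ⟨Sf.card - 1, by omega⟩
  rw [hs'] at hsum hinner hSfcard2
  have hinner' : 2 * (∑ w ∈ Sf, (Sf.filter (fun y => D w y)).card) = (s' + 1) * s' := by
    rw [hinner, Nat.add_sub_cancel]
  have hzN : 2 * (k * (s' + 1)) = (s' + 1) * s' + 2 * P.card := by omega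
  have hz : (2 : ℤ) * (k * (s' + 1)) = (s' + 1) * s' + 2 * (P.card : ℤ) := by exact_mod_cast hzN
  have hs2 : (s' : ℤ) + 1 ≤ 2 * k := by exact_mod_cast hSfcard2
  have hkP : (k : ℤ) ≤ P.card := by
    nlinarith [mul_nonneg (show (0:ℤ) ≤ s' by positivity) (show (0:ℤ) ≤ 2*k - s' - 1 by omega)]
  exact_mod_cast hkP

/-- Let `T` be a tournament on `2k+1` vertices and `X` a set of at most `(2/3)k` vertices each
of in- and out-degree exactly `k`. Then there is a `k`-arc-strong tournament `T'` on the same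
vertex set in which every edge with an endpoint in `X` keeps its orientation from `T`. -/
theorem stmt_12 (k : ℕ) (hk : 0 < k) (T : Fin (2 * k + 1) → Fin (2 * k + 1) → Prop)
    (hT : IsTournament T) (X : Set (Fin (2 * k + 1))) (hX : 3 * X.ncard ≤ 2 * k)
    (hdeg : ∀ x ∈ X, outDeg T x = k ∧ inDeg T x = k) :
    ∃ T' : Fin (2 * k + 1) → Fin (2 * k + 1) → Prop, IsTournament T' ∧ kArcStrong T' k ∧
      ∀ u v, (u ∈ X ∨ v ∈ X) → (T u v ↔ T' u v) := by
  have hcard : Fintype.card (Fin (2 * k + 1)) = 2 * k + 1 := Fintype.card_fin _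
  have hXf : 3 * (Finset.univ.filter (· ∈ X)).card ≤ 2 * k := by
    have hx : X.ncard = (Finset.univ.filter (· ∈ X)).card := by
      rw [← Set.ncard_coe_finset]
      congr 1
      ext a; simp
    omega
  have hTdeg : ∀ x ∈ X, odegF T x = k := by
    intro x hx
    rw [← outDeg_eq_odegF]
    exact (hdeg x hx).1
  obtain ⟨D', h1, h2, h3⟩ := repair X T k hcard hXf hTdeg (Phi k T) T hT
    (fun a b _ => Iff.rfl) le_rfl
  exact ⟨D', h1, fun S hS hSuniv => eulerian_cut k hcard D' h1 h3 S hS hSuniv, h2⟩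
end

section
/- Let T be a tournament with median order (v_1, v_2, ..., v_n) and let F be a set of vertices not containing v_1. Then the number of vertices reachable from v_1 in T - F is at least n - 2|F|. -/
set_option maxHeartbeats 1000000

/-- Number of forward arcs of the tournament `T` on `Fin n` under the ordering obtained by
applying the permutation `σ` to the natural order. -/
noncomputable def forwardArcs {n : ℕ} (T : Fin n → Fin n → Prop) (σ : Equiv.Perm (Fin n)) : ℕ :=
  {p : Fin n × Fin n | p.1 < p.2 ∧ T (σ p.1) (σ p.2)}.ncard

/-- The identity ordering `(0, 1, …, n-1)` is a median order of `T`: it maximizes the number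
of forward arcs among all orderings. -/
def IsMedianOrderId {n : ℕ} (T : Fin n → Fin n → Prop) : Prop :=
  ∀ σ : Equiv.Perm (Fin n), forwardArcs T σ ≤ forwardArcs T (Equiv.refl (Fin n))


variable {n : ℕ}

def slideFun (p q : Fin n) : Fin n → Fin n := fun i =>
  if h : p ≤ i ∧ i < q then ⟨i.val + 1, by have h2 := h.2; rw [Fin.lt_def] at h2; have := q.isLt; omega⟩
  else if i = q then p else i

def slideInv (p q : Fin n) : Fin n → Fin n := fun v =>
  if h : p < v ∧ v ≤ q then ⟨v.val - 1, by have := v.isLt; omega⟩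
  else if v = p then q else v

lemma slideInv_slideFun (p q : Fin n) (hpq : p ≤ q) (i : Fin n) :
    slideInv p q (slideFun p q i) = i := by
  rw [Fin.le_def] at hpq
  unfold slideFun
  split_ifs with h1 h2
  · unfold slideInv
    rw [Fin.le_def] at h1; rw [Fin.lt_def] at h1
    rw [dif_pos (by constructor <;> (first | rw [Fin.lt_def] | rw [Fin.le_def]) <;> simp <;> omega)]
    apply Fin.ext; simp
  · subst h2
    unfold slideInv
    split_ifs with h3 h4
    · exact absurd h3.1 (lt_irrefl p)
    · rfl
    · exact absurd rfl h4
  · unfold slideInv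
    split_ifs with h3 h4
    · exfalso
      simp only [Fin.lt_def, Fin.le_def, not_and, not_lt, not_le] at h1 h3
      simp only [Fin.ext_iff] at h2
      omega
    · exfalso
      subst h4
      simp only [Fin.lt_def, Fin.le_def, not_and, not_lt, not_le] at h1
      simp only [Fin.ext_iff] at h2
      omega
    · rfl

lemma slideFun_slideInv (p q : Fin n) (hpq : p ≤ q) (v : Fin n) :
    slideFun p q (slideInv p q v) = v := by
  rw [Fin.le_def] at hpq
  unfold slideInv
  split_ifs with h1 h2
  · unfold slideFun
    rw [Fin.lt_def, Fin.le_def] at h1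
    rw [dif_pos (by constructor <;> (first | rw [Fin.lt_def] | rw [Fin.le_def]) <;> simp <;> omega)]
    apply Fin.ext; simp; omega
  · unfold slideFun
    split_ifs with h3 h4
    · exact absurd h3.2 (lt_irrefl q)
    · exact h2.symm
    · exact absurd rfl h4
  · unfold slideFun
    split_ifs with h3 h4
    · exfalso
      simp only [Fin.lt_def, Fin.le_def, not_and, not_lt, not_le] at h1 h3
      simp only [Fin.ext_iff] at h2
      omega
    · subst h4
      exfalso
      simp only [Fin.lt_def, Fin.le_def, not_and, not_lt, not_le] at h1
      simp only [Fin.ext_iff] at h2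
      omega
    · rfl

def slide (p q : Fin n) (hpq : p ≤ q) : Equiv.Perm (Fin n) where
  toFun := slideFun p q
  invFun := slideInv p q
  left_inv := slideInv_slideFun p q hpq
  right_inv := slideFun_slideInv p q hpq

lemma slide_symm_apply {n : ℕ} (p q : Fin n) (hpq : p ≤ q) (v : Fin n) :
    (slide p q hpq).symm v = slideInv p q v := rfl

lemma slide_symm_mid {n : ℕ} (p q : Fin n) (hpq : p ≤ q) (v : Fin n)
    (h : p.val < v.val ∧ v.val ≤ q.val) : ((slide p q hpq).symm v).val = v.val - 1 := by
  rw [slide_symm_apply]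
  unfold slideInv
  rw [dif_pos ⟨Fin.lt_def.mpr h.1, Fin.le_def.mpr h.2⟩]

lemma slide_symm_p {n : ℕ} (p q : Fin n) (hpq : p ≤ q) : (slide p q hpq).symm p = q := by
  rw [slide_symm_apply]
  unfold slideInv
  rw [dif_neg (fun h => absurd h.1 (lt_irrefl p)), if_pos rfl]

lemma slide_symm_other {n : ℕ} (p q : Fin n) (hpq : p ≤ q) (v : Fin n)
    (h1 : ¬(p.val < v.val ∧ v.val ≤ q.val)) (h2 : v.val ≠ p.val) :
    (slide p q hpq).symm v = v := by
  rw [slide_symm_apply]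
  unfold slideInv
  rw [dif_neg (fun h => h1 ⟨Fin.lt_def.mp h.1, Fin.le_def.mp h.2⟩),
      if_neg (fun h => h2 (congrArg Fin.val h))]

lemma slide_flip (p q : Fin n) (hpq : p ≤ q) (a b : Fin n) (hab : a.val < b.val) :
    (((slide p q hpq).symm b).val < ((slide p q hpq).symm a).val ↔
      (a.val = p.val ∧ p.val < b.val ∧ b.val ≤ q.val)) := by
  have hpq' := Fin.le_def.mp hpq
  by_cases hb1 : p.val < b.val ∧ b.val ≤ q.val
  · rw [slide_symm_mid p q hpq b hb1]
    by_cases ha1 : p.val < a.val ∧ a.val ≤ q.val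
    · rw [slide_symm_mid p q hpq a ha1]; omega
    · by_cases ha2 : a.val = p.val
      · rw [show a = p from Fin.ext ha2, slide_symm_p]; omega
      · rw [slide_symm_other p q hpq a ha1 ha2]; omega
  · by_cases hb2 : b.val = p.val
    · rw [show b = p from Fin.ext hb2, slide_symm_p]
      rw [slide_symm_other p q hpq a (by omega) (by omega)]
      have := q.isLt; omega
    · rw [slide_symm_other p q hpq b hb1 hb2]
      by_cases ha1 : p.val < a.val ∧ a.val ≤ q.val
      · rw [slide_symm_mid p q hpq a ha1]; omega
      · by_cases ha2 : a.val = p.val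
        · rw [show a = p from Fin.ext ha2, slide_symm_p]; omega
        · rw [slide_symm_other p q hpq a ha1 ha2]; omega

lemma exchange_count (T : Fin n → Fin n → Prop) (hT : IsTournament T)
    (hmed : IsMedianOrderId T) (p q : Fin n) (hpq : p ≤ q) :
    {j : Fin n | p < j ∧ j ≤ q ∧ T j p}.ncard ≤ {j : Fin n | p < j ∧ j ≤ q ∧ T p j}.ncard := by
  classical
  set σ := slide p q hpq with hσ
  set X' : Set (Fin n × Fin n) := {y | (σ.symm y.1) < (σ.symm y.2) ∧ T y.1 y.2} with hX'
  set Y : Set (Fin n × Fin n) := {y | y.1 < y.2 ∧ T y.1 y.2} with hY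
  have hne : ∀ {y1 y2 : Fin n}, T y1 y2 → y1 ≠ y2 := by
    intro y1 y2 ht he; subst he; exact hT.1 y1 ht
  have hfwdσ : forwardArcs T σ = X'.ncard := by
    unfold forwardArcs
    have hpre : {x : Fin n × Fin n | x.1 < x.2 ∧ T (σ x.1) (σ x.2)} =
        (Equiv.prodCongr σ σ) ⁻¹' X' := by
      ext x
      simp [hX', Equiv.prodCongr]
    rw [hpre, ← Equiv.image_symm_eq_preimage, Set.ncard_image_of_injective _ (Equiv.injective _)]
  have hfwdid : forwardArcs T (Equiv.refl (Fin n)) = Y.ncard := rfl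
  have hm := hmed σ
  rw [hfwdσ, hfwdid] at hm
  have split : ∀ s t : Set (Fin n × Fin n), s.ncard = (s ∩ t).ncard + (s \ t).ncard := by
    intro s t
    rw [← Set.ncard_union_eq ?_ (Set.toFinite _) (Set.toFinite _), Set.inter_union_diff]
    rw [Set.disjoint_left]
    rintro x ⟨_, hx2⟩ ⟨_, hx4⟩
    exact hx4 hx2
  have hdiffle : (X' \ Y).ncard ≤ (Y \ X').ncard := by
    have h1 := split X' Y
    have h2 := split Y X'
    rw [Set.inter_comm] at h2
    omega
  have hXY : X' \ Y = (fun j => (j, p)) '' {j : Fin n | p < j ∧ j ≤ q ∧ T j p} := by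
    ext ⟨y1, y2⟩
    simp only [hX', hY, Set.mem_diff, Set.mem_setOf_eq, Set.mem_image, not_and]
    constructor
    · rintro ⟨⟨hlt, ht⟩, hnot⟩
      have hy12 := hne ht
      have h21 : y2.val < y1.val := by
        have hne' : y1.val ≠ y2.val := Fin.ext_iff.not.mp hy12
        have hn : ¬ (y1.val < y2.val) := fun h => hnot (Fin.lt_def.mpr h) ht
        omega
      have := (slide_flip p q hpq y2 y1 h21).mp (by rw [Fin.lt_def] at hlt; exact hlt)
      refine ⟨y1, ⟨?_, ?_, ?_⟩, ?_⟩
      · rw [Fin.lt_def]; omega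
      · rw [Fin.le_def]; omega
      · have : y2 = p := Fin.ext this.1
        rw [← this]; exact ht
      · have h2p : y2 = p := Fin.ext this.1
        rw [h2p]
    · rintro ⟨j, ⟨hj1, hj2, hj3⟩, hje⟩
      obtain ⟨he1, he2⟩ : y1 = j ∧ y2 = p := ⟨(congrArg Prod.fst hje).symm, (congrArg Prod.snd hje).symm⟩
      rw [he1, he2]
      rw [Fin.lt_def] at hj1; rw [Fin.le_def] at hj2
      refine ⟨⟨?_, hj3⟩, ?_⟩
      · rw [Fin.lt_def]
        exact (slide_flip p q hpq p j hj1).mpr ⟨rfl, hj1, hj2⟩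
      · intro hlt
        rw [Fin.lt_def] at hlt; omega
  have hYX : Y \ X' = (fun j => (p, j)) '' {j : Fin n | p < j ∧ j ≤ q ∧ T p j} := by
    ext ⟨y1, y2⟩
    simp only [hX', hY, Set.mem_diff, Set.mem_setOf_eq, Set.mem_image, not_and]
    constructor
    · rintro ⟨⟨hlt, ht⟩, hnot⟩
      have h12 : y1.val < y2.val := Fin.lt_def.mp hlt
      have hinj := (slide p q hpq).symm.injective
      have hnv : ¬ ((σ.symm y1) < (σ.symm y2)) := fun h => hnot h ht
      have hflip : (σ.symm y2).val < (σ.symm y1).val := by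
        have hne2 : (σ.symm y1).val ≠ (σ.symm y2).val :=
          Fin.ext_iff.not.mp (fun h => hne ht (hinj h))
        have hnv' : ¬ ((σ.symm y1).val < (σ.symm y2).val) := fun h => hnv (Fin.lt_def.mpr h)
        omega
      have := (slide_flip p q hpq y1 y2 h12).mp hflip
      refine ⟨y2, ⟨?_, ?_, ?_⟩, ?_⟩
      · rw [Fin.lt_def]; omega
      · rw [Fin.le_def]; omega
      · have h1p : y1 = p := Fin.ext this.1
        rw [← h1p]; exact ht
      · have h1p : y1 = p := Fin.ext this.1
        rw [h1p]
    · rintro ⟨j, ⟨hj1, hj2, hj3⟩, hje⟩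
      obtain ⟨he1, he2⟩ : y1 = p ∧ y2 = j := ⟨(congrArg Prod.fst hje).symm, (congrArg Prod.snd hje).symm⟩
      rw [he1, he2]
      rw [Fin.lt_def] at hj1; rw [Fin.le_def] at hj2
      refine ⟨⟨?_, hj3⟩, ?_⟩
      · rw [Fin.lt_def]; omega
      · intro hlt _
        rw [Fin.lt_def] at hlt
        have h2 := (slide_flip p q hpq p j hj1).mpr ⟨rfl, hj1, hj2⟩
        exact Nat.lt_asymm h2 hlt
  rw [hXY, hYX] at hdiffle
  rwa [Set.ncard_image_of_injective _ (fun a b h => (Prod.mk.injEq _ _ _ _).mp h |>.1),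
       Set.ncard_image_of_injective _ (fun a b h => (Prod.mk.injEq _ _ _ _).mp h |>.2)] at hdiffle

/-- If `(v_1, …, v_n)` is a median order of a tournament `T` and `F` is a set of vertices with
`v_1 ∉ F`, then at least `n - 2|F|` vertices are reachable from `v_1` in `T - F`. -/
theorem stmt_13 (n : ℕ) (hn : 0 < n) (T : Fin n → Fin n → Prop) (hT : IsTournament T)
    (hmed : IsMedianOrderId T) (F : Set (Fin n)) (hF : (⟨0, hn⟩ : Fin n) ∉ F) :
    (n : ℤ) - 2 * (F.ncard : ℤ) ≤
      ({w : Fin n | w ∉ F ∧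
        Relation.ReflTransGen (fun a b => T a b ∧ a ∉ F ∧ b ∉ F) ⟨0, hn⟩ w}.ncard : ℤ) := by
  classical
  set z : Fin n := ⟨0, hn⟩ with hz
  set R : Set (Fin n) := {w : Fin n | w ∉ F ∧
      Relation.ReflTransGen (fun a b => T a b ∧ a ∉ F ∧ b ∉ F) z w} with hR
  have hzR : z ∈ R := ⟨hF, Relation.ReflTransGen.refl⟩
  -- domination : every vertex outside R ∪ F beats every vertex of R
  have dom : ∀ r ∈ R, ∀ b : Fin n, b ∉ F → b ∉ R → T b r := by
    intro r hr b hbF hbR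
    have hbr : b ≠ r := fun h => hbR (h ▸ hr)
    by_contra hnb
    have := (hT.2 b r hbr).mpr
    have hTrb : T r b := by
      by_contra hTrb
      exact hnb (this hTrb)
    exact hbR ⟨hbF, hr.2.tail ⟨hTrb, hr.1, hbF⟩⟩
  -- Finsets
  set RS : Finset (Fin n) := Finset.univ.filter (· ∈ R) with hRS
  set FS : Finset (Fin n) := Finset.univ.filter (· ∈ F) with hFS
  set BS : Finset (Fin n) := Finset.univ.filter (fun w => w ∉ F ∧ w ∉ R) with hBS
  have memRS : ∀ w : Fin n, w ∈ RS ↔ w ∈ R := by intro w; simp [hRS]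
  have memFS : ∀ w : Fin n, w ∈ FS ↔ w ∈ F := by intro w; simp [hFS]
  have memBS : ∀ w : Fin n, w ∈ BS ↔ (w ∉ F ∧ w ∉ R) := by intro w; simp [hBS]
  -- window exchange
  have exch : ∀ r : Fin n, r ∈ RS → ∀ qq : Fin n, r ≤ qq →
      (∀ j : Fin n, r < j → j ≤ qq → j ∉ RS) →
      ((Finset.Ioc r qq).filter (· ∈ BS)).card ≤ ((Finset.Ioc r qq).filter (· ∈ FS)).card := by
    intro r hr qq hq hnor
    have hrR : r ∈ R := (memRS r).mp hr
    have h1 := exchange_count T hT hmed r qq hq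
    have e1 : {j : Fin n | r < j ∧ j ≤ qq ∧ T j r} =
        ↑((Finset.Ioc r qq).filter (fun j => T j r)) := by
      ext j; simp [Finset.mem_Ioc, and_assoc]
    have e2 : {j : Fin n | r < j ∧ j ≤ qq ∧ T r j} =
        ↑((Finset.Ioc r qq).filter (fun j => T r j)) := by
      ext j; simp [Finset.mem_Ioc, and_assoc]
    rw [e1, e2, Set.ncard_coe_finset, Set.ncard_coe_finset] at h1
    have hBin : ((Finset.Ioc r qq).filter (· ∈ BS)).card ≤
        ((Finset.Ioc r qq).filter (fun j => T j r)).card := by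
      apply Finset.card_le_card
      intro j hj
      rw [Finset.mem_filter] at hj ⊢
      refine ⟨hj.1, ?_⟩
      have := (memBS j).mp hj.2
      exact dom r hrR j this.1 this.2
    have hFout : ((Finset.Ioc r qq).filter (fun j => T r j)).card ≤
        ((Finset.Ioc r qq).filter (· ∈ FS)).card := by
      apply Finset.card_le_card
      intro j hj
      rw [Finset.mem_filter] at hj ⊢
      refine ⟨hj.1, ?_⟩
      rw [Finset.mem_Ioc] at hj
      have hjR : j ∉ R := fun h => hnor j hj.1.1 hj.1.2 ((memRS j).mpr h)
      rw [memFS]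
      by_contra hjF
      have hjB : T j r := dom r hrR j hjF hjR
      have hjr : j ≠ r := by
        intro h; exact hT.1 r (h ▸ hj.2)
      exact ((hT.2 j r hjr).mp hjB) hj.2
    omega
  -- the ballot-style window induction
  have hzRS : z ∈ RS := (memRS z).mpr hzR
  have win : ∀ m : ℕ, ∀ qq : Fin n, qq.val = m →
      ((Finset.Iic qq).filter (· ∈ BS)).card ≤ ((Finset.Iic qq).filter (· ∈ FS)).card := by
    intro m
    induction m using Nat.strong_induction_on with
    | _ m IH =>
      intro qq hqq
      have hzle : z ≤ qq := by rw [Fin.le_def]; simp [hz]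
      set S := (Finset.Iic qq).filter (· ∈ RS) with hS
      have hSne : S.Nonempty := ⟨z, by rw [hS, Finset.mem_filter, Finset.mem_Iic]; exact ⟨hzle, hzRS⟩⟩
      set r := S.max' hSne with hr
      have hrS : r ∈ S := S.max'_mem hSne
      have hrRS : r ∈ RS := (Finset.mem_filter.mp hrS).2
      have hrq : r ≤ qq := Finset.mem_Iic.mp (Finset.mem_filter.mp hrS).1
      have hmax : ∀ j : Fin n, r < j → j ≤ qq → j ∉ RS := by
        intro j h1 h2 hj
        have : j ∈ S := by rw [hS, Finset.mem_filter, Finset.mem_Iic]; exact ⟨h2, hj⟩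
        exact absurd (S.le_max' j this) (not_le.mpr h1)
      have hwin := exch r hrRS qq hrq hmax
      have hrR : r ∈ R := (memRS r).mp hrRS
      have hrBS : r ∉ BS := fun hc => ((memBS r).mp hc).2 hrR
      have hrFS : r ∉ FS := fun hc => hrR.1 ((memFS r).mp hc)
      by_cases hr0 : r.val = 0
      · -- whole Iic is {r} ∪ Ioc r qq
        have key : ∀ (P : Fin n → Prop) (hP : ¬ P r), ∀ [DecidablePred P],
            (Finset.Iic qq).filter P = (Finset.Ioc r qq).filter P := by
          intro P hP _
          ext j
          simp only [Finset.mem_filter, Finset.mem_Iic, Finset.mem_Ioc]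
          constructor
          · rintro ⟨h1, h2⟩
            refine ⟨⟨?_, h1⟩, h2⟩
            rw [Fin.lt_def]
            rcases Nat.eq_or_lt_of_le (Nat.zero_le j.val) with h | h
            · exfalso; apply hP
              have : j = r := by apply Fin.ext; omega
              rwa [← this]
            · omega
          · rintro ⟨⟨_, h1⟩, h2⟩; exact ⟨h1, h2⟩
        rw [key (· ∈ BS) hrBS, key (· ∈ FS) hrFS]
        exact hwin
      · -- split Iic qq = Iic r' ∪ {r} ∪ Ioc r qq
        have hrlt : r.val < n := r.isLt
        set r' : Fin n := ⟨r.val - 1, by omega⟩ with hr'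
        have hrqv : r.val ≤ qq.val := Fin.le_def.mp hrq
        have hIH := IH (r.val - 1) (by omega) r' rfl
        have key : ∀ (P : Fin n → Prop) (hP : ¬ P r), ∀ [DecidablePred P],
            ((Finset.Iic qq).filter P).card =
              ((Finset.Iic r').filter P).card + ((Finset.Ioc r qq).filter P).card := by
          intro P hP _
          rw [← Finset.card_union_of_disjoint]
          · congr 1
            ext j
            simp only [Finset.mem_filter, Finset.mem_Iic, Finset.mem_Ioc, Finset.mem_union]
            constructor
            · rintro ⟨h1, h2⟩
              rw [Fin.le_def] at h1
              rcases lt_trichotomy j.val r.val with h | h | h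
              · left; constructor
                · rw [Fin.le_def, hr']; simp; omega
                · exact h2
              · exfalso; apply hP
                have : j = r := Fin.ext h
                rwa [← this]
              · right; exact ⟨⟨Fin.lt_def.mpr h, Fin.le_def.mpr h1⟩, h2⟩
            · rintro (⟨h1, h2⟩ | ⟨⟨h1, h3⟩, h2⟩)
              · rw [Fin.le_def] at h1 ⊢
                rw [hr'] at h1; simp at h1
                constructor
                · omega
                · exact h2
              · exact ⟨h3, h2⟩
          · rw [Finset.disjoint_left]
            intro j hj1 hj2
            rw [Finset.mem_filter, Finset.mem_Iic, Fin.le_def, hr'] at hj1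
            rw [Finset.mem_filter, Finset.mem_Ioc, Fin.lt_def] at hj2
            simp at hj1
            omega
        rw [key (· ∈ BS) hrBS, key (· ∈ FS) hrFS]
        omega
  -- apply at the top element
  set top : Fin n := ⟨n - 1, by omega⟩ with htop
  have hIicTop : Finset.Iic top = Finset.univ := by
    ext j; simp [Finset.mem_Iic, Fin.le_def, htop]
    omega
  have hBF := win (n - 1) top rfl
  rw [hIicTop] at hBF
  -- partition counting
  have hcards : RS.card + FS.card + BS.card = n := by
    have hdisj1 : Disjoint RS FS := by
      rw [Finset.disjoint_left]
      intro a ha hb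
      rw [memRS] at ha; rw [memFS] at hb
      exact ha.1 hb
    have hdisj2 : Disjoint (RS ∪ FS) BS := by
      rw [Finset.disjoint_left]
      intro a ha hb
      rw [memBS] at hb
      rcases Finset.mem_union.mp ha with h | h
      · rw [memRS] at h; exact hb.2 h
      · rw [memFS] at h; exact hb.1 h
    have huniv : RS ∪ FS ∪ BS = Finset.univ := by
      ext a
      simp only [Finset.mem_union, Finset.mem_univ, iff_true]
      rw [memRS, memFS, memBS]
      tauto
    have := Finset.card_union_of_disjoint hdisj2
    rw [huniv, Finset.card_union_of_disjoint hdisj1] at this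
    rw [Finset.card_univ, Fintype.card_fin] at this
    omega
  have hBuniv : Finset.univ.filter (· ∈ BS) = BS := by
    ext a; simp
  have hFuniv : Finset.univ.filter (· ∈ FS) = FS := by
    ext a; simp
  rw [hBuniv, hFuniv] at hBF
  -- convert ncards
  have hFcard : F.ncard = FS.card := by
    rw [← Set.ncard_coe_finset FS]
    congr 1
    ext a; rw [Finset.coe_filter]; simp [hFS]
  have hRcard : R.ncard = RS.card := by
    rw [← Set.ncard_coe_finset RS]
    congr 1
    ext a; rw [Finset.coe_filter]; simp [hRS]
  rw [hFcard, hRcard]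
  omega
end

section
/- In any median order (v_1,...,v_n) of a tournament T, for all indices 1 ≤ i < j ≤ n, the vertex v_i dominates (is an in-neighbour of) at least half of the vertices v_{i+1},...,v_j; in particular v_i v_{i+1} is an arc of T for each i < n. -/
private lemma stmt14_key (n : ℕ) (T : Fin n → Fin n → Prop) (hT : IsTournament T)
    (hmed : IsMedianOrderId T) (i j : Fin n) (hij : i < j) :
    (j : ℕ) - (i : ℕ) ≤ 2 * {m : Fin n | i < m ∧ m ≤ j ∧ T i m}.ncard := by
  have hijn : (i : ℕ) < (j : ℕ) := hij
  have hjn := j.isLt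
  -- `f` sends position `k` (for `i ≤ k < j`) to `k+1` and `j` to `i`; `g` is its inverse.
  set f : Fin n → Fin n := fun k =>
    if _ : (i : ℕ) ≤ (k : ℕ) ∧ (k : ℕ) < (j : ℕ) then ⟨(k : ℕ) + 1, by omega⟩
    else if (k : ℕ) = (j : ℕ) then i else k with hfdef
  set g : Fin n → Fin n := fun k =>
    if _ : (i : ℕ) < (k : ℕ) ∧ (k : ℕ) ≤ (j : ℕ) then
      ⟨(k : ℕ) - 1, lt_of_le_of_lt (Nat.sub_le _ _) k.isLt⟩
    else if (k : ℕ) = (i : ℕ) then j else k with hgdef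
  have fval : ∀ k : Fin n, (f k : ℕ) =
      if (i : ℕ) ≤ (k : ℕ) ∧ (k : ℕ) < (j : ℕ) then (k : ℕ) + 1
      else if (k : ℕ) = (j : ℕ) then (i : ℕ) else (k : ℕ) := by
    intro k
    simp only [hfdef]
    split_ifs <;> rfl
  have gval : ∀ k : Fin n, (g k : ℕ) =
      if (i : ℕ) < (k : ℕ) ∧ (k : ℕ) ≤ (j : ℕ) then (k : ℕ) - 1
      else if (k : ℕ) = (i : ℕ) then (j : ℕ) else (k : ℕ) := by
    intro k
    simp only [hgdef]
    split_ifs <;> rfl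
  have hgf : ∀ k, g (f k) = k := by
    intro k
    apply Fin.ext
    rw [gval, fval]
    have := k.isLt
    split_ifs <;> omega
  have hfg : ∀ k, f (g k) = k := by
    intro k
    apply Fin.ext
    rw [fval, gval]
    have := k.isLt
    split_ifs <;> omega
  set σ : Equiv.Perm (Fin n) := ⟨f, g, hgf, hfg⟩ with hσdef
  have hglt : ∀ a b : Fin n, ((g a : ℕ) < (g b : ℕ) ↔
      (((a : ℕ) < (b : ℕ) ∧ ¬((a : ℕ) = (i : ℕ) ∧ (b : ℕ) ≤ (j : ℕ))) ∨
        ((b : ℕ) = (i : ℕ) ∧ (i : ℕ) < (a : ℕ) ∧ (a : ℕ) ≤ (j : ℕ)))) := by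
    intro a b
    rw [gval, gval]
    have := a.isLt
    have := b.isLt
    split_ifs <;> omega
  -- The relevant sets of pairs
  set A1 : Set (Fin n × Fin n) := {p | (p.1 : ℕ) < (p.2 : ℕ) ∧ T p.1 p.2} with hA1def
  set X : Set (Fin n × Fin n) :=
    {p | (p.1 : ℕ) < (p.2 : ℕ) ∧ (p.1 : ℕ) = (i : ℕ) ∧ (p.2 : ℕ) ≤ (j : ℕ) ∧ T p.1 p.2}
    with hXdef
  set Y : Set (Fin n × Fin n) :=
    {p | (p.2 : ℕ) = (i : ℕ) ∧ (i : ℕ) < (p.1 : ℕ) ∧ (p.1 : ℕ) ≤ (j : ℕ) ∧ T p.1 p.2}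
    with hYdef
  set B : Set (Fin n × Fin n) := {p | (g p.1 : ℕ) < (g p.2 : ℕ) ∧ T p.1 p.2} with hBdef
  have hinj : Function.Injective (Prod.map f f) :=
    (Function.LeftInverse.injective hgf).prodMap (Function.LeftInverse.injective hgf)
  have himg : Prod.map f f '' {p : Fin n × Fin n | p.1 < p.2 ∧ T (f p.1) (f p.2)} = B := by
    ext ⟨a, b⟩
    simp only [Set.mem_image, Set.mem_setOf_eq, Prod.exists, Prod.map_apply, Prod.mk.injEq,
      hBdef]
    constructor
    · rintro ⟨p1, p2, ⟨hlt, hTp⟩, h1, h2⟩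
      subst h1; subst h2
      rw [hgf, hgf]
      exact ⟨hlt, hTp⟩
    · rintro ⟨hlt, hTab⟩
      refine ⟨g a, g b, ⟨?_, ?_⟩, hfg a, hfg b⟩
      · exact hlt
      · rw [hfg, hfg]; exact hTab
  have hAσ : forwardArcs T σ = B.ncard := by
    have : forwardArcs T σ = ({p : Fin n × Fin n | p.1 < p.2 ∧ T (f p.1) (f p.2)}).ncard := rfl
    rw [this, ← himg, Set.ncard_image_of_injective _ hinj]
  have hA1 : forwardArcs T (Equiv.refl (Fin n)) = A1.ncard := rfl
  have hBeq : B = (A1 \ X) ∪ Y := by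
    ext ⟨a, b⟩
    simp only [hBdef, hA1def, hXdef, hYdef, Set.mem_setOf_eq, Set.mem_union, Set.mem_diff]
    rw [hglt a b]
    tauto
  have hXA : X ⊆ A1 := fun p hp => ⟨hp.1, hp.2.2.2⟩
  have hdisj : Disjoint (A1 \ X) Y := by
    rw [Set.disjoint_left]
    rintro p ⟨⟨hab, -⟩, -⟩ ⟨hbi, hia, -⟩
    omega
  have hcard : forwardArcs T σ = A1.ncard - X.ncard + Y.ncard := by
    rw [hAσ, hBeq, Set.ncard_union_eq hdisj (Set.toFinite _) (Set.toFinite _),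
      Set.ncard_diff hXA (Set.toFinite _)]
  have hXle : X.ncard ≤ A1.ncard := Set.ncard_le_ncard hXA (Set.toFinite _)
  have hmed' := hmed σ
  rw [hcard, hA1] at hmed'
  have hYX : Y.ncard ≤ X.ncard := by omega
  -- identify `X` and `Y` with sets of vertices
  set S : Set (Fin n) := {m : Fin n | i < m ∧ m ≤ j ∧ T i m} with hSdef
  set S' : Set (Fin n) := {m : Fin n | i < m ∧ m ≤ j ∧ T m i} with hS'def
  have hX : X = (fun m => ((i : Fin n), m)) '' S := by
    ext ⟨a, b⟩
    simp only [hXdef, hSdef, Set.mem_setOf_eq, Set.mem_image, Prod.mk.injEq]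
    constructor
    · rintro ⟨hab, hai, hbj, hTab⟩
      have ha : a = i := Fin.ext hai
      subst ha
      exact ⟨b, ⟨hab, hbj, hTab⟩, rfl, rfl⟩
    · rintro ⟨m, ⟨h1, h2, h3⟩, h4, h5⟩
      subst h4; subst h5
      exact ⟨h1, rfl, h2, h3⟩
  have hY : Y = (fun m => (m, (i : Fin n))) '' S' := by
    ext ⟨a, b⟩
    simp only [hYdef, hS'def, Set.mem_setOf_eq, Set.mem_image, Prod.mk.injEq]
    constructor
    · rintro ⟨hbi, hia, haj, hTab⟩
      have hb : b = i := Fin.ext hbi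
      subst hb
      exact ⟨a, ⟨hia, haj, hTab⟩, rfl, rfl⟩
    · rintro ⟨m, ⟨h1, h2, h3⟩, h4, h5⟩
      subst h4; subst h5
      exact ⟨rfl, h1, h2, h3⟩
  have hXcard : X.ncard = S.ncard := by
    rw [hX]
    exact Set.ncard_image_of_injective _ (fun x y h => (Prod.ext_iff.mp h).2)
  have hYcard : Y.ncard = S'.ncard := by
    rw [hY]
    exact Set.ncard_image_of_injective _ (fun x y h => (Prod.ext_iff.mp h).1)
  have hunion : S ∪ S' = Set.Ioc i j := by
    ext m
    simp only [hSdef, hS'def, Set.mem_union, Set.mem_setOf_eq, Set.mem_Ioc]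
    constructor
    · rintro (⟨h1, h2, -⟩ | ⟨h1, h2, -⟩) <;> exact ⟨h1, h2⟩
    · rintro ⟨h1, h2⟩
      by_cases hTm : T i m
      · exact Or.inl ⟨h1, h2, hTm⟩
      · exact Or.inr ⟨h1, h2, (hT.2 m i (ne_of_lt h1).symm).mpr hTm⟩
  have hdisjS : Disjoint S S' := by
    rw [Set.disjoint_left]
    rintro m ⟨h1, -, h3⟩ ⟨-, -, h3'⟩
    exact (hT.2 i m (ne_of_lt h1)).mp h3 h3'
  have hIoc : (Set.Ioc i j).ncard = (j : ℕ) - (i : ℕ) := by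
    rw [← Finset.coe_Ioc, Set.ncard_coe_finset, Fin.card_Ioc]
  have hsum : S.ncard + S'.ncard = (j : ℕ) - (i : ℕ) := by
    rw [← Set.ncard_union_eq hdisjS (Set.toFinite _) (Set.toFinite _), hunion, hIoc]
  omega

/-- In any median order `(v_1, …, v_n)` of a tournament `T`, for all `i < j` the vertex `v_i`
dominates at least half of the vertices `v_{i+1}, …, v_j`; in particular `v_i v_{i+1}` is an
arc of `T` for each `i < n`. -/
theorem stmt_14 (n : ℕ) (T : Fin n → Fin n → Prop) (hT : IsTournament T)
    (hmed : IsMedianOrderId T) :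
    (∀ i j : Fin n, i < j →
      (j : ℕ) - (i : ℕ) ≤ 2 * {m : Fin n | i < m ∧ m ≤ j ∧ T i m}.ncard) ∧
    (∀ i : Fin n, ∀ h : (i : ℕ) + 1 < n, T i ⟨(i : ℕ) + 1, h⟩) := by
  refine ⟨fun i j hij => stmt14_key n T hT hmed i j hij, ?_⟩
  intro i h
  set j : Fin n := ⟨(i : ℕ) + 1, h⟩ with hjdef
  have hij : i < j := by simp [hjdef, Fin.lt_def]
  have hkey := stmt14_key n T hT hmed i j hij
  have hjval : (j : ℕ) = (i : ℕ) + 1 := rfl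
  rw [hjval] at hkey
  have hpos : {m : Fin n | i < m ∧ m ≤ j ∧ T i m}.ncard ≠ 0 := by omega
  obtain ⟨m, hm1, hm2, hm3⟩ := Set.nonempty_of_ncard_ne_zero hpos
  have : m = j := by
    apply Fin.ext
    have h1 : (i : ℕ) < (m : ℕ) := hm1
    have h2 : (m : ℕ) ≤ (j : ℕ) := hm2
    rw [hjval] at h2
    rw [hjval]
    omega
  rwa [this] at hm3
end

section
/- For every tournament T on n ≥ 2k+1 vertices, there exists a family of at most 2k vertex subsets whose successive inversion transforms T into a k-strong tournament; that is, sinv_k(T) ≤ 2k. -/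
/-- Inversion of the vertex set `X` in the digraph `D`. -/
def dinv {V : Type*} (D : V → V → Prop) (X : Set V) : V → V → Prop :=
  fun u v => (u ∈ X ∧ v ∈ X ∧ D v u) ∨ (¬ (u ∈ X ∧ v ∈ X) ∧ D u v)

/-- Successive inversions of a list of vertex sets. -/
def dinvFam {V : Type*} (D : V → V → Prop) (Xs : List (Set V)) : V → V → Prop :=
  Xs.foldl dinv D

/-- `D` is `k`-strong. -/
def kStrong {V : Type*} [Fintype V] (D : V → V → Prop) (k : ℕ) : Prop :=
  k + 1 ≤ Fintype.card V ∧
  ∀ X : Set V, X.ncard ≤ k - 1 → ∀ u ∉ X, ∀ v ∉ X,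
    Relation.ReflTransGen (fun a b => D a b ∧ a ∉ X ∧ b ∉ X) u v

/- ### Auxiliary lemmas about inversions -/

lemma dinv_isTournament {V : Type*} {D : V → V → Prop} (hD : IsTournament D)
    (X : Set V) : IsTournament (dinv D X) := by
  classical
  constructor
  · intro v h
    rcases h with ⟨_, _, h⟩ | ⟨_, h⟩ <;> exact hD.1 v h
  · intro u v huv
    have h2 := hD.2 u v huv
    by_cases hu : u ∈ X <;> by_cases hv : v ∈ X <;> simp [dinv, hu, hv] <;> tauto

lemma dinvFam_cons {V : Type*} (D : V → V → Prop) (X : Set V) (Xs : List (Set V)) :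
    dinvFam D (X :: Xs) = dinvFam (dinv D X) Xs := rfl

lemma dinvFam_isTournament {V : Type*} {D : V → V → Prop} (hD : IsTournament D) :
    ∀ Xs : List (Set V), IsTournament (dinvFam D Xs) := by
  intro Xs
  induction Xs generalizing D with
  | nil => exact hD
  | cons X Xs ih => exact ih (dinv_isTournament hD X)

lemma dinv_notmem {V : Type*} {D : V → V → Prop} {X : Set V} {v b : V} (hv : v ∉ X) :
    dinv D X v b ↔ D v b := by
  simp [dinv, hv]

lemma dinvFam_notmem {V : Type*} {D : V → V → Prop} {Xs : List (Set V)} {v b : V}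
    (h : ∀ X ∈ Xs, v ∉ X) : dinvFam D Xs v b ↔ D v b := by
  induction Xs generalizing D with
  | nil => exact Iff.rfl
  | cons X Xs ih =>
      rw [dinvFam_cons]
      rw [ih (fun Y hY => h Y (List.mem_cons_of_mem _ hY))]
      exact dinv_notmem (h X List.mem_cons_self)

/-- The greedy rewiring lemma: with `l.length` inversions one can force all arcs incident
to the vertices of `l` to agree with an arbitrary target tournament `G`. -/
lemma greedy {V : Type*} (G : V → V → Prop) (hG : IsTournament G) :
    ∀ (l : List V), l.Nodup → ∀ (A : Set V), (∀ x ∈ l, x ∉ A) →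
    ∀ (D : V → V → Prop), IsTournament D →
    ∃ Xs : List (Set V), Xs.length = l.length ∧ IsTournament (dinvFam D Xs) ∧
      (∀ X ∈ Xs, ∀ x ∈ A, x ∉ X) ∧
      (∀ a ∈ l, ∀ b, b ∉ A → a ≠ b → ((dinvFam D Xs) a b ↔ G a b)) := by
  classical
  intro l
  induction l with
  | nil =>
      intro _ A _ D hD
      exact ⟨[], rfl, hD, by simp, by simp⟩
  | cons v l' ih =>
      intro hnd A hlA D hD
      have hvA : v ∉ A := hlA v List.mem_cons_self
      have hvl' : v ∉ l' := (List.nodup_cons.mp hnd).1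
      set B : Set V := {x | x ≠ v ∧ x ∉ A ∧ ¬ (D v x ↔ G v x)} with hB
      set X₀ : Set V := insert v B with hX₀
      have hvX : v ∈ X₀ := Set.mem_insert _ _
      have hD₁ : IsTournament (dinv D X₀) := dinv_isTournament hD _
      have hfix : ∀ x, x ≠ v → x ∉ A → ((dinv D X₀) v x ↔ G v x) := by
        intro x hxv hxA
        by_cases hx : x ∈ X₀
        · have hxB : x ∈ B := by
            rcases Set.mem_insert_iff.mp hx with h | h
            · exact absurd h hxv
            · exact h
          have hw : ¬ (D v x ↔ G v x) := hxB.2.2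
          have h1 : dinv D X₀ v x ↔ D x v := by simp [dinv, hvX, hx]
          have h2 := hD.2 v x (Ne.symm hxv)
          rw [h1]; tauto
        · have hxB : x ∉ B := fun h => hx (Set.mem_insert_of_mem _ h)
          have hok : D v x ↔ G v x := by
            by_contra hc
            exact hxB ⟨hxv, hxA, hc⟩
          have h1 : dinv D X₀ v x ↔ D v x := by simp [dinv, hx]
          rw [h1]; exact hok
      obtain ⟨Xs', hlen, htourn, havoid, hagree⟩ :=
        ih (List.nodup_cons.mp hnd).2 (insert v A)
          (fun x hx => by
            simp only [Set.mem_insert_iff, not_or]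
            exact ⟨fun he => hvl' (he ▸ hx), hlA x (List.mem_cons_of_mem _ hx)⟩)
          (dinv D X₀) hD₁
      have hfinal : dinvFam D (X₀ :: Xs') = dinvFam (dinv D X₀) Xs' := rfl
      have hvpres : ∀ b, (dinvFam (dinv D X₀) Xs') v b ↔ (dinv D X₀) v b := by
        intro b
        exact dinvFam_notmem (fun X hX => havoid X hX v (Set.mem_insert _ _))
      have hvside : ∀ b, b ≠ v → b ∉ A → ((dinvFam D (X₀ :: Xs')) v b ↔ G v b) := by
        intro b hbv hbA
        rw [hfinal, hvpres b]
        exact hfix b hbv hbA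
      refine ⟨X₀ :: Xs', by simp [hlen], by rw [hfinal]; exact htourn, ?_, ?_⟩
      · intro X hX x hxA
        rcases List.mem_cons.mp hX with rfl | hX'
        · intro hmem
          rcases Set.mem_insert_iff.mp hmem with rfl | hmem'
          · exact hvA hxA
          · exact hmem'.2.1 hxA
        · exact havoid X hX' x (Set.mem_insert_of_mem _ hxA)
      · intro a ha b hbA hab
        rcases List.mem_cons.mp ha with rfl | ha'
        · exact hvside b (Ne.symm hab) hbA
        · by_cases hbv : b = v
          · subst hbv
            have h1 : (dinvFam D (X₀ :: Xs')) b a ↔ G b a :=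
              hvside a hab (hlA a (List.mem_cons_of_mem _ ha'))
            have ht : IsTournament (dinvFam D (X₀ :: Xs')) := by
              rw [hfinal]; exact htourn
            rw [ht.2 a b hab, hG.2 a b hab]
            exact not_congr h1
          · have : b ∉ (insert v A : Set V) := by
              simp only [Set.mem_insert_iff, not_or]
              exact ⟨hbv, hbA⟩
            rw [hfinal]
            exact hagree a ha' b this hab

/- ### The target tournament -/

lemma modif (x mm : ℕ) (h : x < 2*mm) : x % mm = if x < mm then x else x - mm := by
  split
  · exact Nat.mod_eq_of_lt ‹_›
  · rw [Nat.mod_eq_sub_mod (by omega)]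
    exact Nat.mod_eq_of_lt (by omega)

/-- The target pattern: a rotational (circulant) tournament on the vertices with value
`≤ 2k`, every other vertex beats the vertices with value `< k` and is beaten by those with
value in `[k, 2k)`; remaining pairs ordered by value. -/
def Gt (n k : ℕ) : Fin n → Fin n → Prop := fun a b =>
  if a.val < 2*k+1 ∧ b.val < 2*k+1 then (b.val + (2*k+1) - a.val) % (2*k+1) ∈ Finset.Icc 1 k
  else if b.val < 2*k+1 then b.val < k
  else if a.val < 2*k+1 then k ≤ a.val
  else a.val < b.val

lemma Gt_isTournament (n k : ℕ) : IsTournament (Gt n k) := by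
  constructor
  · intro v
    by_cases h : v.val < 2*k+1
    · have e : v.val + (2*k+1) - v.val = 2*k+1 := by omega
      simp [Gt, h, e, Finset.mem_Icc]
    · simp [Gt, h]
  · intro u v huv
    have hvals : u.val ≠ v.val := fun h => huv (Fin.ext h)
    by_cases hu : u.val < 2*k+1 <;> by_cases hv : v.val < 2*k+1
    · have h1 := modif (v.val + (2*k+1) - u.val) (2*k+1) (by omega)
      have h2 := modif (u.val + (2*k+1) - v.val) (2*k+1) (by omega)
      simp only [Gt, hu, hv, and_self, if_true, Finset.mem_Icc]
      rw [h1, h2]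
      split_ifs <;> omega
    · simp [Gt, hu, hv]
      try omega
    · simp [Gt, hu, hv]
      try omega
    · simp [Gt, hu, hv]
      try omega

/-- Any tournament agreeing with `Gt n k` on all arcs incident to vertices of value `< 2k`
is `k`-strong. -/
lemma target_kstrong {n k : ℕ} (hk : 0 < k) (hn : 2*k+1 ≤ n) (D : Fin n → Fin n → Prop)
    (hD : IsTournament D)
    (hag : ∀ a b : Fin n, a ≠ b → a.val < 2*k → (D a b ↔ Gt n k a b)) :
    kStrong D k := by
  classical
  have hGt := Gt_isTournament n k
  have hag2 : ∀ a b : Fin n, a ≠ b → (a.val < 2*k ∨ b.val < 2*k) → (D a b ↔ Gt n k a b) := by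
    intro a b hab h
    rcases h with h | h
    · exact hag a b hab h
    · rw [hD.2 a b hab, hGt.2 a b hab]
      exact not_congr (hag b a (Ne.symm hab) h)
  constructor
  · simp only [Fintype.card_fin]; omega
  intro X hX u hu v hv
  set m := 2*k+1 with hm
  have hm0 : 0 < m := by omega
  have hsvlt : ∀ p : ℕ, p % m < n := fun p => lt_of_lt_of_le (Nat.mod_lt _ hm0) hn
  set sv : ℕ → Fin n := fun p => ⟨p % m, hsvlt p⟩ with hsv
  have PH : ∀ p : ℕ, p < m → ∃ t, 1 ≤ t ∧ t ≤ k ∧ sv (p + t) ∉ X := by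
    intro p hp
    by_contra hc
    push_neg at hc
    have hinj : Set.InjOn (fun t => sv (p + t)) ↑(Finset.Icc 1 k) := by
      intro t₁ h₁ t₂ h₂ he
      simp only [Finset.coe_Icc, Set.mem_Icc] at h₁ h₂
      have hval : (p + t₁) % m = (p + t₂) % m := congrArg Fin.val he
      rw [modif (p + t₁) m (by omega), modif (p + t₂) m (by omega)] at hval
      split_ifs at hval <;> omega
    have hcard : ((Finset.Icc 1 k).image (fun t => sv (p + t))).card = k := by
      rw [Finset.card_image_of_injOn hinj, Nat.card_Icc]; omega
    have hsub : (((Finset.Icc 1 k).image (fun t => sv (p + t)) : Finset (Fin n)) : Set (Fin n)) ⊆ X := by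
      intro x hx
      simp only [Finset.coe_image, Set.mem_image, Finset.mem_coe, Finset.mem_Icc] at hx
      obtain ⟨t, ⟨h1, h2⟩, rfl⟩ := hx
      exact hc t h1 h2
    have hle := Set.ncard_le_ncard hsub (Set.toFinite X)
    rw [Set.ncard_coe_finset, hcard] at hle
    omega
  have REACH : ∀ d p q : ℕ, p < m → q < m → (q + m - p) % m = d → sv p ∉ X → sv q ∉ X →
      Relation.ReflTransGen (fun a b => D a b ∧ a ∉ X ∧ b ∉ X) (sv p) (sv q) := by
    intro d
    induction d using Nat.strong_induction_on with
    | _ d ihd =>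
      intro p q hp hq hd hpX hqX
      have hmod := modif (q + m - p) m (by omega)
      rw [hd] at hmod
      by_cases hd0 : d = 0
      · have hpq : p = q := by split_ifs at hmod <;> omega
        have : sv p = sv q := by rw [hpq]
        rw [this]
      · by_cases hdk : d ≤ k
        · have hpq : p ≠ q := by
            intro h; rw [h] at hmod; split_ifs at hmod <;> omega
          have hne : sv p ≠ sv q := by
            intro h
            have := congrArg Fin.val h
            simp only [hsv] at this
            rw [Nat.mod_eq_of_lt hp, Nat.mod_eq_of_lt hq] at this
            exact hpq this
          refine Relation.ReflTransGen.single ⟨?_, hpX, hqX⟩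
          rw [hag2 (sv p) (sv q) hne (by
            simp only [hsv, Nat.mod_eq_of_lt hp, Nat.mod_eq_of_lt hq]
            omega)]
          show Gt n k (sv p) (sv q)
          simp only [Gt, hsv, Nat.mod_eq_of_lt hp, Nat.mod_eq_of_lt hq]
          rw [if_pos (by constructor <;> omega)]
          rw [hd]
          simp only [Finset.mem_Icc]
          omega
        · obtain ⟨t, ht1, htk, htX⟩ := PH p hp
          set p' : ℕ := (p + t) % m with hp'def
          have hp'm : p' < m := Nat.mod_lt _ hm0
          have e1 : p' = if p + t < m then p + t else p + t - m := modif (p + t) m (by omega)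
          have hsvp' : sv (p + t) = sv p' := by
            apply Fin.ext
            simp only [hsv]
            rw [Nat.mod_eq_of_lt hp'm]
          have hp'X : sv p' ∉ X := hsvp' ▸ htX
          have dist1 : (p' + m - p) % m = t := by
            rw [modif (p' + m - p) m (by omega)]
            split_ifs at e1 <;> split_ifs <;> omega
          have dist2 : (q + m - p') % m = d - t := by
            rw [modif (q + m - p') m (by omega)]
            split_ifs at hmod <;> split_ifs at e1 <;> split_ifs <;> omega
          have hpp' : p ≠ p' := by
            split_ifs at e1 <;> omega
          have hnep : sv p ≠ sv p' := by
            intro h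
            have := congrArg Fin.val h
            simp only [hsv] at this
            rw [Nat.mod_eq_of_lt hp, Nat.mod_eq_of_lt hp'm] at this
            exact hpp' this
          have harc : D (sv p) (sv p') := by
            rw [hag2 (sv p) (sv p') hnep (by
              simp only [hsv, Nat.mod_eq_of_lt hp, Nat.mod_eq_of_lt hp'm]
              omega)]
            show Gt n k (sv p) (sv p')
            simp only [Gt, hsv, Nat.mod_eq_of_lt hp, Nat.mod_eq_of_lt hp'm]
            rw [if_pos (by constructor <;> omega)]
            rw [dist1]
            simp only [Finset.mem_Icc]
            omega
          exact Relation.ReflTransGen.head ⟨harc, hpX, hp'X⟩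
            (ihd (d - t) (by omega) p' q hp'm hq dist2 hp'X hqX)
  have ENTRY : ∃ p : ℕ, p < m ∧ sv p ∉ X ∧
      Relation.ReflTransGen (fun a b => D a b ∧ a ∉ X ∧ b ∉ X) u (sv p) := by
    by_cases hu' : u.val < m
    · refine ⟨u.val, hu', ?_, ?_⟩
      · have : sv u.val = u := by
          apply Fin.ext; simp only [hsv]; exact Nat.mod_eq_of_lt hu'
        rw [this]; exact hu
      · have : sv u.val = u := by
          apply Fin.ext; simp only [hsv]; exact Nat.mod_eq_of_lt hu'
        rw [this]
    · obtain ⟨t, ht1, htk, htX⟩ := PH (2*k) (by omega)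
      have hval : (2*k + t) % m = t - 1 := by
        rw [modif (2*k + t) m (by omega)]
        split_ifs <;> omega
      have hsveq : sv (2*k + t) = sv (t - 1) := by
        apply Fin.ext
        simp only [hsv]
        rw [hval, Nat.mod_eq_of_lt (by omega : t - 1 < m)]
      refine ⟨t - 1, by omega, hsveq ▸ htX, Relation.ReflTransGen.single ⟨?_, hu, hsveq ▸ htX⟩⟩
      have hne : u ≠ sv (t - 1) := by
        intro h
        have := congrArg Fin.val h
        simp only [hsv, Nat.mod_eq_of_lt (by omega : t - 1 < m)] at this
        omega
      rw [hag2 u (sv (t - 1)) hne (by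
        right
        simp only [hsv, Nat.mod_eq_of_lt (by omega : t - 1 < m)]
        omega)]
      show Gt n k u (sv (t - 1))
      simp only [Gt, hsv, Nat.mod_eq_of_lt (by omega : t - 1 < m)]
      rw [if_neg (by omega), if_pos (by omega)]
      omega
  have EXIT : ∃ q : ℕ, q < m ∧ sv q ∉ X ∧
      Relation.ReflTransGen (fun a b => D a b ∧ a ∉ X ∧ b ∉ X) (sv q) v := by
    by_cases hv' : v.val < m
    · refine ⟨v.val, hv', ?_, ?_⟩
      · have : sv v.val = v := by
          apply Fin.ext; simp only [hsv]; exact Nat.mod_eq_of_lt hv'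
        rw [this]; exact hv
      · have : sv v.val = v := by
          apply Fin.ext; simp only [hsv]; exact Nat.mod_eq_of_lt hv'
        rw [this]
    · obtain ⟨t, ht1, htk, htX⟩ := PH (k - 1) (by omega)
      have hlt : k - 1 + t < m := by omega
      have hval : (k - 1 + t) % m = k - 1 + t := Nat.mod_eq_of_lt hlt
      refine ⟨k - 1 + t, hlt, by rwa [hsv], Relation.ReflTransGen.single ⟨?_, htX, hv⟩⟩
      have hne : sv (k - 1 + t) ≠ v := by
        intro h
        have := congrArg Fin.val h
        simp only [hsv, hval] at this
        omega
      rw [hag2 (sv (k - 1 + t)) v hne (by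
        left
        simp only [hsv, hval]
        omega)]
      show Gt n k (sv (k - 1 + t)) v
      simp only [Gt, hsv, hval]
      rw [if_neg (by omega), if_neg (by omega), if_pos (by omega)]
      omega
  obtain ⟨p, hpm, hpX, hup⟩ := ENTRY
  obtain ⟨q, hqm, hqX, hqv⟩ := EXIT
  exact hup.trans ((REACH ((q + m - p) % m) p q hpm hqm rfl hpX hqX).trans hqv)

/-- Every tournament on `n ≥ 2k+1` vertices can be made `k`-strong by inverting at most `2k`
vertex sets: `sinv_k(T) ≤ 2k`. -/
theorem stmt_16 (n k : ℕ) (hk : 0 < k) (hn : 2 * k + 1 ≤ n)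
    (T : Fin n → Fin n → Prop) (hT : IsTournament T) :
    ∃ Xs : List (Set (Fin n)), Xs.length ≤ 2 * k ∧ kStrong (dinvFam T Xs) k := by
  classical
  have hG := Gt_isTournament n k
  have hmem : ∀ i ∈ List.range (2*k), i < n := by
    intro i hi
    have := List.mem_range.mp hi
    omega
  set l : List (Fin n) := (List.range (2*k)).pmap (fun i h => (⟨i, h⟩ : Fin n)) hmem with hl
  have hnd : l.Nodup := by
    refine List.Nodup.pmap ?_ List.nodup_range
    intro a ha b hb he
    exact congrArg Fin.val he
  have hmeml : ∀ a : Fin n, a.val < 2*k → a ∈ l := by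
    intro a hav
    rw [hl, List.mem_pmap]
    exact ⟨a.val, List.mem_range.mpr hav, Fin.ext rfl⟩
  obtain ⟨Xs, hlen, htourn, _, hagree⟩ :=
    greedy (Gt n k) hG l hnd ∅ (by simp) T hT
  refine ⟨Xs, ?_, ?_⟩
  · rw [hlen, hl, List.length_pmap, List.length_range]
  · refine target_kstrong hk hn _ htourn ?_
    intro a b hab hav
    exact hagree a (hmeml a hav) b (Set.notMem_empty b) hab
end

section
/- There exists a tournament T of order 5k-3 that cannot be made k-strong by a single inversion: explicitly, if V(T) partitions into A, B, C where T⟨A⟩ and T⟨C⟩ are eulerian tournaments of order 2k-1, |B| = k-1, and A ⇒ B∪C and B ⇒ C, then for every vertex set X, Inv(T;X) is not k-strong. -/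
namespace Stmt17

/-- The index type: `A ⊕ B ⊕ C`. -/
abbrev S (k : ℕ) := (ZMod (2*k-1) ⊕ Fin (k-1)) ⊕ ZMod (2*k-1)

/-- Rotational (circulant) tournament relation on `ZMod (2k-1)`. -/
def rot (k : ℕ) (a b : ZMod (2*k-1)) : Prop := (b - a).val ∈ Finset.Icc 1 (k-1)

/-- The tournament structure on `S k`. -/
def R (k : ℕ) : S k → S k → Prop
  | .inl (.inl a), .inl (.inl b) => rot k a b
  | .inl (.inl _), .inl (.inr _) => True
  | .inl (.inl _), .inr _ => True
  | .inl (.inr _), .inl (.inl _) => False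
  | .inl (.inr a), .inl (.inr b) => a < b
  | .inl (.inr _), .inr _ => True
  | .inr _, .inl (.inl _) => False
  | .inr _, .inl (.inr _) => False
  | .inr a, .inr b => rot k a b

variable {k : ℕ}

lemma rot_irrefl (hk : 0 < k) (a : ZMod (2*k-1)) : ¬ rot k a a := by
  haveI : NeZero (2*k-1) := ⟨by omega⟩
  simp [rot]

lemma rot_asymm (hk : 0 < k) {a b : ZMod (2*k-1)} (hab : a ≠ b) :
    rot k a b ↔ ¬ rot k b a := by
  haveI : NeZero (2*k-1) := ⟨by omega⟩
  have hd : b - a ≠ 0 := sub_ne_zero.mpr hab.symm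
  have h1 : a - b = -(b - a) := by ring
  haveI : NeZero (b - a) := ⟨hd⟩
  have h2 : (a - b).val = (2*k-1) - (b-a).val := by rw [h1]; exact ZMod.val_neg_of_ne_zero _
  have h3 : (b - a).val ≠ 0 := fun h => hd ((ZMod.val_eq_zero _).mp h)
  have h4 : (b - a).val < 2*k-1 := ZMod.val_lt _
  simp only [rot, Finset.mem_Icc, h2]
  omega

lemma ncard_ball (hk : 0 < k) :
    {d : ZMod (2*k-1) | d.val ∈ Finset.Icc 1 (k-1)}.ncard = k - 1 := by
  haveI : NeZero (2*k-1) := ⟨by omega⟩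
  have himg : {d : ZMod (2*k-1) | d.val ∈ Finset.Icc 1 (k-1)}
      = (fun n : ℕ => (n : ZMod (2*k-1))) '' ↑(Finset.Icc 1 (k-1)) := by
    ext d
    constructor
    · intro hd
      exact ⟨d.val, by simpa using hd, ZMod.natCast_rightInverse d⟩
    · rintro ⟨n, hn, rfl⟩
      simp only [Finset.coe_Icc, Set.mem_Icc] at hn
      simp only [Set.mem_setOf_eq, Finset.mem_Icc]
      rw [ZMod.val_cast_of_lt (by omega)]
      exact hn
  have hinj : Set.InjOn (fun n : ℕ => (n : ZMod (2*k-1))) ↑(Finset.Icc 1 (k-1)) := by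
    intro x hx y hy hxy
    simp only [Finset.coe_Icc, Set.mem_Icc] at hx hy
    have hx' := ZMod.val_cast_of_lt (n := 2*k-1) (a := x) (by omega)
    have hy' := ZMod.val_cast_of_lt (n := 2*k-1) (a := y) (by omega)
    have := congrArg ZMod.val hxy
    simpa [hx', hy'] using this
  rw [himg, Set.ncard_image_of_injOn hinj, Set.ncard_coe_finset, Nat.card_Icc]
  omega

lemma ncard_preimage_equiv {α β : Type*} (e : α ≃ β) (s : Set β) :
    (e ⁻¹' s).ncard = s.ncard := by
  rw [← Equiv.image_symm_eq_preimage]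
  exact Set.ncard_image_of_injective s e.symm.injective

lemma ncard_rot_out (hk : 0 < k) (α : ZMod (2*k-1)) :
    {β : ZMod (2*k-1) | rot k α β}.ncard = k - 1 := by
  have h : {β : ZMod (2*k-1) | rot k α β}
      = (Equiv.subRight α) ⁻¹' {d : ZMod (2*k-1) | d.val ∈ Finset.Icc 1 (k-1)} := rfl
  rw [h, ncard_preimage_equiv]
  exact ncard_ball hk

lemma ncard_rot_in (hk : 0 < k) (α : ZMod (2*k-1)) :
    {β : ZMod (2*k-1) | rot k β α}.ncard = k - 1 := by
  have h : {β : ZMod (2*k-1) | rot k β α}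
      = (Equiv.subLeft α) ⁻¹' {d : ZMod (2*k-1) | d.val ∈ Finset.Icc 1 (k-1)} := rfl
  rw [h, ncard_preimage_equiv]
  exact ncard_ball hk

section Fibers

variable (e : Fin (5*k-3) ≃ S k)

lemma ncard_fiber_A (s : Set (ZMod (2*k-1))) :
    {u : Fin (5*k-3) | ∃ β, e u = Sum.inl (Sum.inl β) ∧ β ∈ s}.ncard = s.ncard := by
  have h : {u : Fin (5*k-3) | ∃ β, e u = Sum.inl (Sum.inl β) ∧ β ∈ s}
      = e ⁻¹' ((fun β : ZMod (2*k-1) => (Sum.inl (Sum.inl β) : S k)) '' s) := by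
    ext u
    simp only [Set.mem_setOf_eq, Set.mem_preimage, Set.mem_image]
    constructor
    · rintro ⟨β, h1, h2⟩; exact ⟨β, h2, h1.symm⟩
    · rintro ⟨β, h2, h1⟩; exact ⟨β, h1.symm, h2⟩
  rw [h, ncard_preimage_equiv]
  exact Set.ncard_image_of_injective s
    (fun x y hxy => by simpa using hxy)

lemma ncard_fiber_B (s : Set (Fin (k-1))) :
    {u : Fin (5*k-3) | ∃ β, e u = Sum.inl (Sum.inr β) ∧ β ∈ s}.ncard = s.ncard := by
  have h : {u : Fin (5*k-3) | ∃ β, e u = Sum.inl (Sum.inr β) ∧ β ∈ s}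
      = e ⁻¹' ((fun β : Fin (k-1) => (Sum.inl (Sum.inr β) : S k)) '' s) := by
    ext u
    simp only [Set.mem_setOf_eq, Set.mem_preimage, Set.mem_image]
    constructor
    · rintro ⟨β, h1, h2⟩; exact ⟨β, h2, h1.symm⟩
    · rintro ⟨β, h2, h1⟩; exact ⟨β, h1.symm, h2⟩
  rw [h, ncard_preimage_equiv]
  exact Set.ncard_image_of_injective s
    (fun x y hxy => by simpa using hxy)

lemma ncard_fiber_C (s : Set (ZMod (2*k-1))) :
    {u : Fin (5*k-3) | ∃ β, e u = Sum.inr β ∧ β ∈ s}.ncard = s.ncard := by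
  have h : {u : Fin (5*k-3) | ∃ β, e u = Sum.inr β ∧ β ∈ s}
      = e ⁻¹' ((fun β : ZMod (2*k-1) => (Sum.inr β : S k)) '' s) := by
    ext u
    simp only [Set.mem_setOf_eq, Set.mem_preimage, Set.mem_image]
    constructor
    · rintro ⟨β, h1, h2⟩; exact ⟨β, h2, h1.symm⟩
    · rintro ⟨β, h2, h1⟩; exact ⟨β, h1.symm, h2⟩
  rw [h, ncard_preimage_equiv]
  exact Set.ncard_image_of_injective s
    (fun x y hxy => by simpa using hxy)

end Fibers

end Stmt17

/-- There is a tournament `T` of order `5k-3`, with a vertex partition `(A, B, C)` where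
`T⟨A⟩` and `T⟨C⟩` are eulerian tournaments of order `2k-1`, `|B| = k-1`, `A ⇒ B ∪ C` and
`B ⇒ C`, such that no single inversion makes `T` `k`-strong. -/
theorem stmt_17 (k : ℕ) (hk : 0 < k) :
    ∃ (T : Fin (5 * k - 3) → Fin (5 * k - 3) → Prop)
      (A B C : Set (Fin (5 * k - 3))),
      IsTournament T ∧
      A ∪ B ∪ C = Set.univ ∧ Disjoint A B ∧ Disjoint A C ∧ Disjoint B C ∧
      A.ncard = 2 * k - 1 ∧ B.ncard = k - 1 ∧ C.ncard = 2 * k - 1 ∧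
      (∀ a ∈ A, {w ∈ A | T a w}.ncard = k - 1 ∧ {w ∈ A | T w a}.ncard = k - 1) ∧
      (∀ c ∈ C, {w ∈ C | T c w}.ncard = k - 1 ∧ {w ∈ C | T w c}.ncard = k - 1) ∧
      (∀ a ∈ A, ∀ x ∈ B ∪ C, T a x) ∧ (∀ b ∈ B, ∀ c ∈ C, T b c) ∧
      ∀ X : Set (Fin (5 * k - 3)), ¬ kStrong (dinv T X) k := by
  haveI : NeZero (2*k-1) := ⟨by omega⟩
  have hcard : Fintype.card (Fin (5*k-3)) = Fintype.card (Stmt17.S k) := by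
    simp [Stmt17.S, ZMod.card]
    omega
  obtain ⟨e⟩ : Nonempty (Fin (5*k-3) ≃ Stmt17.S k) := ⟨Fintype.equivOfCardEq hcard⟩
  refine ⟨fun u v => Stmt17.R k (e u) (e v),
    {u | ∃ a, e u = .inl (.inl a)}, {u | ∃ b, e u = .inl (.inr b)}, {u | ∃ c, e u = .inr c},
    ⟨?_, ?_⟩, ?_, ?_, ?_, ?_, ?_, ?_, ?_, ?_, ?_, ?_, ?_, ?_⟩
  · -- irreflexive
    intro v
    show ¬ Stmt17.R k (e v) (e v)
    rcases hev : e v with (a | b) | c <;> simp [Stmt17.R]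
    · exact Stmt17.rot_irrefl hk a
    · exact Stmt17.rot_irrefl hk c
  · -- asymmetric
    intro u v huv
    have hne : e u ≠ e v := fun h => huv (e.injective h)
    show Stmt17.R k (e u) (e v) ↔ ¬ Stmt17.R k (e v) (e u)
    rcases heu : e u with (a | b) | c <;> rcases hev : e v with (a' | b') | c' <;>
      simp [Stmt17.R]
    · rw [heu, hev] at hne
      have : a ≠ a' := fun h => hne (by rw [h])
      exact Stmt17.rot_asymm hk this
    · rw [heu, hev] at hne
      have hbb : b ≠ b' := fun h => hne (by rw [h])
      exact ⟨le_of_lt, fun h => lt_of_le_of_ne h hbb⟩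
    · rw [heu, hev] at hne
      have : c ≠ c' := fun h => hne (by rw [h])
      exact Stmt17.rot_asymm hk this
  · -- union
    ext u
    simp only [Set.mem_union, Set.mem_setOf_eq, Set.mem_univ, iff_true]
    rcases hu : e u with (a | b) | c
    · exact Or.inl (Or.inl ⟨a, rfl⟩)
    · exact Or.inl (Or.inr ⟨b, rfl⟩)
    · exact Or.inr ⟨c, rfl⟩
  · -- Disjoint A B
    rw [Set.disjoint_left]
    rintro u ⟨a, ha⟩ ⟨b, hb⟩
    rw [ha] at hb
    simp at hb
  · rw [Set.disjoint_left]
    rintro u ⟨a, ha⟩ ⟨c, hc⟩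
    rw [ha] at hc
    simp at hc
  · rw [Set.disjoint_left]
    rintro u ⟨b, hb⟩ ⟨c, hc⟩
    rw [hb] at hc
    simp at hc
  · -- A.ncard
    have h : {u : Fin (5*k-3) | ∃ a, e u = .inl (.inl a)}
        = {u : Fin (5*k-3) | ∃ a, e u = Sum.inl (Sum.inl a) ∧ a ∈ (Set.univ : Set (ZMod (2*k-1)))} := by
      simp
    rw [h, Stmt17.ncard_fiber_A e, Set.ncard_univ, Nat.card_zmod]
  · have h : {u : Fin (5*k-3) | ∃ b, e u = .inl (.inr b)}
        = {u : Fin (5*k-3) | ∃ b, e u = Sum.inl (Sum.inr b) ∧ b ∈ (Set.univ : Set (Fin (k-1)))} := by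
      simp
    rw [h, Stmt17.ncard_fiber_B e, Set.ncard_univ, Nat.card_eq_fintype_card, Fintype.card_fin]
  · have h : {u : Fin (5*k-3) | ∃ c, e u = .inr c}
        = {u : Fin (5*k-3) | ∃ c, e u = Sum.inr c ∧ c ∈ (Set.univ : Set (ZMod (2*k-1)))} := by
      simp
    rw [h, Stmt17.ncard_fiber_C e, Set.ncard_univ, Nat.card_zmod]
  · -- A degrees
    rintro a ⟨α, hα⟩
    constructor
    · have h : {w | w ∈ {u : Fin (5*k-3) | ∃ a, e u = .inl (.inl a)} ∧ Stmt17.R k (e a) (e w)}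
          = {w : Fin (5*k-3) | ∃ β, e w = Sum.inl (Sum.inl β) ∧ β ∈ {β | Stmt17.rot k α β}} := by
        ext w
        simp only [Set.mem_setOf_eq]
        constructor
        · rintro ⟨⟨β, hβ⟩, hT⟩
          rw [hα, hβ] at hT
          exact ⟨β, hβ, hT⟩
        · rintro ⟨β, hβ, hr⟩
          refine ⟨⟨β, hβ⟩, ?_⟩
          rw [hα, hβ]
          exact hr
      rw [h, Stmt17.ncard_fiber_A e]
      exact Stmt17.ncard_rot_out hk α
    · have h : {w | w ∈ {u : Fin (5*k-3) | ∃ a, e u = .inl (.inl a)} ∧ Stmt17.R k (e w) (e a)}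
          = {w : Fin (5*k-3) | ∃ β, e w = Sum.inl (Sum.inl β) ∧ β ∈ {β | Stmt17.rot k β α}} := by
        ext w
        simp only [Set.mem_setOf_eq]
        constructor
        · rintro ⟨⟨β, hβ⟩, hT⟩
          rw [hα, hβ] at hT
          exact ⟨β, hβ, hT⟩
        · rintro ⟨β, hβ, hr⟩
          refine ⟨⟨β, hβ⟩, ?_⟩
          rw [hα, hβ]
          exact hr
      rw [h, Stmt17.ncard_fiber_A e]
      exact Stmt17.ncard_rot_in hk α
  · -- C degrees
    rintro c ⟨γ, hγ⟩
    constructor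
    · have h : {w | w ∈ {u : Fin (5*k-3) | ∃ c, e u = .inr c} ∧ Stmt17.R k (e c) (e w)}
          = {w : Fin (5*k-3) | ∃ β, e w = Sum.inr β ∧ β ∈ {β | Stmt17.rot k γ β}} := by
        ext w
        simp only [Set.mem_setOf_eq]
        constructor
        · rintro ⟨⟨β, hβ⟩, hT⟩
          rw [hγ, hβ] at hT
          exact ⟨β, hβ, hT⟩
        · rintro ⟨β, hβ, hr⟩
          refine ⟨⟨β, hβ⟩, ?_⟩
          rw [hγ, hβ]
          exact hr
      rw [h, Stmt17.ncard_fiber_C e]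
      exact Stmt17.ncard_rot_out hk γ
    · have h : {w | w ∈ {u : Fin (5*k-3) | ∃ c, e u = .inr c} ∧ Stmt17.R k (e w) (e c)}
          = {w : Fin (5*k-3) | ∃ β, e w = Sum.inr β ∧ β ∈ {β | Stmt17.rot k β γ}} := by
        ext w
        simp only [Set.mem_setOf_eq]
        constructor
        · rintro ⟨⟨β, hβ⟩, hT⟩
          rw [hγ, hβ] at hT
          exact ⟨β, hβ, hT⟩
        · rintro ⟨β, hβ, hr⟩
          refine ⟨⟨β, hβ⟩, ?_⟩
          rw [hγ, hβ]
          exact hr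
      rw [h, Stmt17.ncard_fiber_C e]
      exact Stmt17.ncard_rot_in hk γ
  · -- A ⇒ B ∪ C
    rintro a ⟨α, hα⟩ x hx
    show Stmt17.R k (e a) (e x)
    rcases hx with ⟨b, hb⟩ | ⟨c, hc⟩
    · rw [hα, hb]; trivial
    · rw [hα, hc]; trivial
  · -- B ⇒ C
    rintro b ⟨β, hβ⟩ c ⟨γ, hγ⟩
    show Stmt17.R k (e b) (e c)
    rw [hβ, hγ]; trivial
  · -- main statement
    intro X hks
    obtain ⟨-, hreach⟩ := hks
    by_cases h1 : ∃ u, u ∉ X ∧ ∃ α, e u = Sum.inl (Sum.inl α)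
    · -- some A-vertex outside X: its in-neighborhood is a small cut
      obtain ⟨u, huX, α, hα⟩ := h1
      set N : Set (Fin (5*k-3)) :=
        {w | ∃ β, e w = Sum.inl (Sum.inl β) ∧ β ∈ {β | Stmt17.rot k β α}} with hNdef
      have hN : N.ncard = k - 1 :=
        (Stmt17.ncard_fiber_A e _).trans (Stmt17.ncard_rot_in hk α)
      have huN : u ∉ N := by
        rintro ⟨β, hβ, hrot⟩
        rw [hα] at hβ
        have : α = β := by simpa using hβ
        exact Stmt17.rot_irrefl hk α (this ▸ hrot)
      set v := e.symm (Sum.inr (0 : ZMod (2*k-1))) with hvdef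
      have hv : e v = Sum.inr 0 := e.apply_symm_apply _
      have hvN : v ∉ N := by
        rintro ⟨β, hβ, -⟩
        rw [hv] at hβ
        simp at hβ
      have hvu : v ≠ u := by
        intro h
        rw [h, hα] at hv
        simp at hv
      have hkey : ∀ w, dinv (fun u v => Stmt17.R k (e u) (e v)) X w u → w ∈ N := by
        intro w hw
        rcases hw with ⟨-, huX', -⟩ | ⟨-, hT⟩
        · exact absurd huX' huX
        · rcases hew : e w with (β | b) | γ
          · rw [hew, hα] at hT
            exact ⟨β, hew, hT⟩
          · rw [hew, hα] at hT
            simp [Stmt17.R] at hT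
          · rw [hew, hα] at hT
            simp [Stmt17.R] at hT
      have hr := hreach N (le_of_eq hN) v hvN u huN
      have hfinal : ∀ x, Relation.ReflTransGen
          (fun a b => dinv (fun u v => Stmt17.R k (e u) (e v)) X a b ∧ a ∉ N ∧ b ∉ N) v x →
          x ≠ u := by
        intro x hx
        induction hx with
        | refl => exact hvu
        | tail _ hstep _ =>
          intro heq
          subst heq
          exact hstep.2.1 (hkey _ hstep.1)
      exact hfinal u hr rfl
    · by_cases h2 : ∃ u, u ∉ X ∧ ∃ γ, e u = Sum.inr γ
      · -- some C-vertex outside X: its out-neighborhood is a small cut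
        obtain ⟨u, huX, γ, hγ⟩ := h2
        set N : Set (Fin (5*k-3)) :=
          {w | ∃ β, e w = Sum.inr β ∧ β ∈ {β | Stmt17.rot k γ β}} with hNdef
        have hN : N.ncard = k - 1 :=
          (Stmt17.ncard_fiber_C e _).trans (Stmt17.ncard_rot_out hk γ)
        have huN : u ∉ N := by
          rintro ⟨β, hβ, hrot⟩
          rw [hγ] at hβ
          have : γ = β := by simpa using hβ
          exact Stmt17.rot_irrefl hk γ (this ▸ hrot)
        set v := e.symm (Sum.inl (Sum.inl (0 : ZMod (2*k-1)))) with hvdef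
        have hv : e v = Sum.inl (Sum.inl 0) := e.apply_symm_apply _
        have hvN : v ∉ N := by
          rintro ⟨β, hβ, -⟩
          rw [hv] at hβ
          simp at hβ
        have hvu : v ≠ u := by
          intro h
          rw [h, hγ] at hv
          simp at hv
        have hkey : ∀ w, dinv (fun u v => Stmt17.R k (e u) (e v)) X u w → w ∈ N := by
          intro w hw
          rcases hw with ⟨huX', -, -⟩ | ⟨-, hT⟩
          · exact absurd huX' huX
          · rcases hew : e w with (β | b) | δ
            · rw [hew, hγ] at hT
              simp [Stmt17.R] at hT
            · rw [hew, hγ] at hT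
              simp [Stmt17.R] at hT
            · rw [hew, hγ] at hT
              exact ⟨δ, hew, hT⟩
        have hr := hreach N (le_of_eq hN) u huN v hvN
        have hfinal : ∀ x, Relation.ReflTransGen
            (fun a b => dinv (fun u v => Stmt17.R k (e u) (e v)) X a b ∧ a ∉ N ∧ b ∉ N) u x →
            x = u ∨ x ∈ N := by
          intro x hx
          induction hx with
          | refl => exact Or.inl rfl
          | tail _ hstep ih =>
            rcases ih with rfl | hbN
            · exact Or.inr (hkey _ hstep.1)
            · exact absurd hbN hstep.2.1
        rcases hfinal v hr with h | h
        · exact hvu h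
        · exact hvN h
      · -- A ∪ C ⊆ X: delete B \ X
        push_neg at h1 h2
        have hA : ∀ w α, e w = Sum.inl (Sum.inl α) → w ∈ X := by
          intro w α hw
          by_contra hwX
          exact h1 w hwX α hw
        have hC : ∀ w γ, e w = Sum.inr γ → w ∈ X := by
          intro w γ hw
          by_contra hwX
          exact h2 w hwX γ hw
        set N : Set (Fin (5*k-3)) :=
          {w | (∃ b, e w = Sum.inl (Sum.inr b)) ∧ w ∉ X} with hNdef
        have hNle : N.ncard ≤ k - 1 := by
          have hsub : N ⊆ {w : Fin (5*k-3) | ∃ b, e w = Sum.inl (Sum.inr b)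
              ∧ b ∈ (Set.univ : Set (Fin (k-1)))} := by
            rintro w ⟨⟨b, hb⟩, -⟩
            exact ⟨b, hb, trivial⟩
          calc N.ncard ≤ _ := Set.ncard_le_ncard hsub (Set.toFinite _)
            _ = k - 1 := by
              rw [Stmt17.ncard_fiber_B e, Set.ncard_univ, Nat.card_eq_fintype_card,
                Fintype.card_fin]
        set u := e.symm (Sum.inl (Sum.inl (0 : ZMod (2*k-1)))) with hudef
        set v := e.symm (Sum.inr (0 : ZMod (2*k-1))) with hvdef
        have hu : e u = Sum.inl (Sum.inl 0) := e.apply_symm_apply _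
        have hv : e v = Sum.inr 0 := e.apply_symm_apply _
        have huN : u ∉ N := by
          rintro ⟨⟨b, hb⟩, -⟩
          rw [hu] at hb
          simp at hb
        have hvN : v ∉ N := by
          rintro ⟨⟨b, hb⟩, -⟩
          rw [hv] at hb
          simp at hb
        have hr := hreach N hNle u huN v hvN
        have hclosed : ∀ x, Relation.ReflTransGen
            (fun a b => dinv (fun u v => Stmt17.R k (e u) (e v)) X a b ∧ a ∉ N ∧ b ∉ N) u x →
            (∃ a, e x = Sum.inl (Sum.inl a)) ∨ ((∃ b, e x = Sum.inl (Sum.inr b)) ∧ x ∈ X) := by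
          intro x hx
          induction hx with
          | refl => exact Or.inl ⟨0, hu⟩
          | @tail b c _ hstep ih =>
            obtain ⟨hd, hbN, hcN⟩ := hstep
            rcases ih with ⟨a, hba⟩ | ⟨⟨bb, hbb⟩, hbX⟩
            · have hbX : b ∈ X := hA b a hba
              rcases hd with ⟨-, hcX, hT⟩ | ⟨hnand, hT⟩
              · rcases hec : e c with (β | b') | δ
                · exact Or.inl ⟨β, rfl⟩
                · rw [hec, hba] at hT
                  simp [Stmt17.R] at hT
                · rw [hec, hba] at hT
                  simp [Stmt17.R] at hT
              · have hcX : c ∉ X := fun hcX => hnand ⟨hbX, hcX⟩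
                rcases hec : e c with (β | b') | δ
                · exact Or.inl ⟨β, rfl⟩
                · exact absurd ⟨⟨b', hec⟩, hcX⟩ hcN
                · exact absurd (hC c δ hec) hcX
            · rcases hd with ⟨-, hcX, hT⟩ | ⟨hnand, hT⟩
              · rcases hec : e c with (β | b') | δ
                · exact Or.inl ⟨β, rfl⟩
                · exact Or.inr ⟨⟨b', rfl⟩, hcX⟩
                · rw [hec, hbb] at hT
                  simp [Stmt17.R] at hT
              · have hcX : c ∉ X := fun hcX => hnand ⟨hbX, hcX⟩
                rcases hec : e c with (β | b') | δ
                · rw [hec, hbb] at hT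
                  simp [Stmt17.R] at hT
                · exact absurd ⟨⟨b', hec⟩, hcX⟩ hcN
                · exact absurd (hC c δ hec) hcX
        rcases hclosed v hr with ⟨a, ha⟩ | ⟨⟨b, hb⟩, -⟩
        · rw [hv] at ha
          simp at ha
        · rw [hv] at hb
          simp at hb
end

section
/- There exists a tournament T of order 4k-2 that cannot be made k-arc-strong by a single inversion: explicitly, if V(T) partitions into A and B, each inducing an eulerian tournament of order 2k-1, with all arcs between them going from A to B, then for every vertex subset X, Inv(T;X) is not k-arc-strong. -/
namespace Stmt18Aux

lemma mge {n x : ℕ} (hn : 0 < n) (h1 : n ≤ x) (h2 : x < 2*n) : x % n = x - n := by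
  rw [Nat.mod_eq_sub_mod h1, Nat.mod_eq_of_lt (by omega)]

lemma I1 {n r j : ℕ} (hn : 0 < n) (hr : r < n) (hj : j < n) :
    ((r + j) % n + n - r) % n = j := by
  rcases le_or_gt n (r + j) with h | h
  · rw [mge hn h (by omega)]
    have e : r + j - n + n - r = j := by omega
    rw [e, Nat.mod_eq_of_lt hj]
  · rw [Nat.mod_eq_of_lt h]
    have e : r + j + n - r = j + n := by omega
    rw [e, mge hn (by omega) (by omega)]
    omega

lemma I2 {n r s : ℕ} (hn : 0 < n) (hr : r < n) (hs : s < n) :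
    (r + (s + n - r) % n) % n = s := by
  rcases le_or_gt n (s + n - r) with h | h
  · rw [mge hn h (by omega)]
    have e : r + (s + n - r - n) = s := by omega
    rw [e, Nat.mod_eq_of_lt hs]
  · rw [Nat.mod_eq_of_lt h]
    have e : r + (s + n - r) = s + n := by omega
    rw [e, mge hn (by omega) (by omega)]
    omega

lemma I4 {n r s : ℕ} (hn : 0 < n) (hr : r < n) (hs : s < n) :
    (r + n - (r + n - s) % n) % n = s := by
  rcases le_or_gt n (r + n - s) with h | h
  · rw [mge hn h (by omega)]
    have e : r + n - (r + n - s - n) = n + s := by omega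
    rw [e, mge hn (by omega) (by omega)]
    omega
  · rw [Nat.mod_eq_of_lt h]
    have e : r + n - (r + n - s) = s := by omega
    rw [e, Nat.mod_eq_of_lt hs]

lemma I5 {n r s : ℕ} (hn : 0 < n) (hr : r < n) (hs : s < n) (hne : r ≠ s) :
    (s + n - r) % n + (r + n - s) % n = n ∧ 1 ≤ (s + n - r) % n := by
  rcases lt_or_gt_of_ne hne with h | h
  · rw [mge hn (by omega) (by omega), Nat.mod_eq_of_lt (by omega)]
    omega
  · rw [Nat.mod_eq_of_lt (by omega), mge hn (by omega) (by omega)]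
    omega

/-- The tournament: circulant inside each half, all arcs from the low half to the high half. -/
def TT (k : ℕ) : Fin (4 * k - 2) → Fin (4 * k - 2) → Prop := fun u v =>
  (u.val < 2 * k - 1 ∧ 2 * k - 1 ≤ v.val) ∨
  (((u.val < 2 * k - 1 ∧ v.val < 2 * k - 1) ∨ (2 * k - 1 ≤ u.val ∧ 2 * k - 1 ≤ v.val)) ∧
    1 ≤ (v.val + (2 * k - 1) - u.val) % (2 * k - 1) ∧
    (v.val + (2 * k - 1) - u.val) % (2 * k - 1) ≤ k - 1)

lemma TT_irrefl (k : ℕ) (v : Fin (4 * k - 2)) : ¬ TT k v v := by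
  rintro (⟨h1, h2⟩ | ⟨_, h1, _⟩)
  · omega
  · rw [show v.val + (2 * k - 1) - v.val = 2 * k - 1 by omega, Nat.mod_self] at h1
    omega

lemma TT_noback (k : ℕ) {u v : Fin (4 * k - 2)} (hu : 2 * k - 1 ≤ u.val)
    (hv : v.val < 2 * k - 1) : ¬ TT k u v := by
  rintro (⟨h, _⟩ | ⟨(⟨h, _⟩ | ⟨_, h⟩), _⟩) <;> omega

lemma TT_total (k : ℕ) (hk : 0 < k) (u v : Fin (4 * k - 2)) (hne : u ≠ v) :
    TT k u v ↔ ¬ TT k v u := by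
  have hn : 0 < 2 * k - 1 := by omega
  have hu2 : u.val < 4 * k - 2 := u.isLt
  have hv2 : v.val < 4 * k - 2 := v.isLt
  have hvne : u.val ≠ v.val := fun h => hne (Fin.ext h)
  rcases lt_or_ge u.val (2 * k - 1) with hu | hu <;> rcases lt_or_ge v.val (2 * k - 1) with hv | hv
  · -- both in A
    obtain ⟨hsum, hge⟩ := I5 (n := 2 * k - 1) (r := u.val) (s := v.val) hn hu hv hvne
    obtain ⟨_, hge'⟩ := I5 (n := 2 * k - 1) (r := v.val) (s := u.val) hn hv hu hvne.symm
    constructor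
    · rintro (⟨_, h⟩ | ⟨_, hb1, hb2⟩)
      · omega
      · rintro (⟨h, _⟩ | ⟨_, hc1, hc2⟩)
        · omega
        · omega
    · intro hnc
      refine Or.inr ⟨Or.inl ⟨hu, hv⟩, hge, ?_⟩
      by_contra hgt
      exact hnc (Or.inr ⟨Or.inl ⟨hv, hu⟩, hge', by omega⟩)
  · -- u ∈ A, v ∈ B
    exact iff_of_true (Or.inl ⟨hu, hv⟩) (TT_noback k hv hu)
  · -- u ∈ B, v ∈ A
    rw [iff_comm, not_iff_comm, iff_comm]
    exact iff_of_true (Or.inl ⟨hv, hu⟩) (TT_noback k hu hv)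
  · -- both in B
    have e1 : v.val + (2 * k - 1) - u.val
        = (v.val - (2 * k - 1)) + (2 * k - 1) - (u.val - (2 * k - 1)) := by omega
    have e2 : u.val + (2 * k - 1) - v.val
        = (u.val - (2 * k - 1)) + (2 * k - 1) - (v.val - (2 * k - 1)) := by omega
    have hru : u.val - (2 * k - 1) < 2 * k - 1 := by omega
    have hrv : v.val - (2 * k - 1) < 2 * k - 1 := by omega
    have hrne : u.val - (2 * k - 1) ≠ v.val - (2 * k - 1) := by omega
    obtain ⟨hsum, hge⟩ := I5 (n := 2 * k - 1) hn hru hrv hrne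
    obtain ⟨hsum', hge'⟩ := I5 (n := 2 * k - 1) hn hrv hru hrne.symm
    rw [show (u.val - (2*k-1)) + (2*k-1) - (v.val - (2*k-1)) = u.val + (2*k-1) - v.val
        from e2.symm] at hsum hge'
    rw [show (v.val - (2*k-1)) + (2*k-1) - (u.val - (2*k-1)) = v.val + (2*k-1) - u.val
        from e1.symm] at hsum hge hsum'
    constructor
    · rintro (⟨h, _⟩ | ⟨_, hb1, hb2⟩)
      · omega
      · rintro (⟨h, _⟩ | ⟨_, hc1, hc2⟩)
        · omega
        · omega
    · intro hnc
      refine Or.inr ⟨Or.inr ⟨hu, hv⟩, hge, ?_⟩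
      by_contra hgt
      exact hnc (Or.inr ⟨Or.inr ⟨hv, hu⟩, hge', by omega⟩)


lemma deg_out (k : ℕ) (hk : 0 < k) (base : ℕ) (hbase : base = 0 ∨ base = 2 * k - 1)
    (a : Fin (4 * k - 2)) (ha1 : base ≤ a.val) (ha2 : a.val < base + (2 * k - 1)) :
    {w : Fin (4 * k - 2) | (base ≤ w.val ∧ w.val < base + (2 * k - 1)) ∧ TT k a w}.ncard
      = k - 1 := by
  have hn : 0 < 2 * k - 1 := by omega
  have hbn : base + (2 * k - 1) ≤ 4 * k - 2 := by omega
  set r := a.val - base with hr0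
  have hrlt : r < 2 * k - 1 := by omega
  have hg : ∀ j : ℕ, base + (r + j) % (2 * k - 1) < 4 * k - 2 := fun j => by
    have := Nat.mod_lt (r + j) hn; omega
  set g : ℕ → Fin (4 * k - 2) := fun j => ⟨base + (r + j) % (2 * k - 1), hg j⟩ with hgdef
  have hinj : Set.InjOn g (Set.Icc 1 (k - 1)) := by
    intro j hj j' hj' he
    simp only [Set.mem_Icc] at hj hj'
    have hee : (r + j) % (2 * k - 1) = (r + j') % (2 * k - 1) := by
      have := congrArg Fin.val he
      simp only [hgdef] at this
      omega
    have h1 := I1 hn hrlt (show j < 2 * k - 1 by omega)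
    have h2 := I1 hn hrlt (show j' < 2 * k - 1 by omega)
    rw [hee] at h1
    omega
  have hset : {w : Fin (4 * k - 2) | (base ≤ w.val ∧ w.val < base + (2 * k - 1)) ∧ TT k a w}
      = g '' Set.Icc 1 (k - 1) := by
    ext w
    simp only [Set.mem_setOf_eq, Set.mem_image, Set.mem_Icc]
    constructor
    · rintro ⟨⟨hw1, hw2⟩, hT⟩
      have hd : 1 ≤ (w.val + (2 * k - 1) - a.val) % (2 * k - 1) ∧
          (w.val + (2 * k - 1) - a.val) % (2 * k - 1) ≤ k - 1 := by
        rcases hT with ⟨h1, h2⟩ | ⟨_, hb⟩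
        · exfalso; rcases hbase with h | h <;> omega
        · exact hb
      refine ⟨(w.val + (2 * k - 1) - a.val) % (2 * k - 1), hd, ?_⟩
      apply Fin.ext
      show base + (r + (w.val + (2 * k - 1) - a.val) % (2 * k - 1)) % (2 * k - 1) = w.val
      have e : w.val + (2 * k - 1) - a.val = (w.val - base) + (2 * k - 1) - r := by omega
      rw [e, I2 hn hrlt (show w.val - base < 2 * k - 1 by omega)]
      omega
    · rintro ⟨j, ⟨hj1, hj2⟩, rfl⟩
      have hjlt : j < 2 * k - 1 := by omega
      have hmod := Nat.mod_lt (r + j) hn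
      have hgv : (g j).val = base + (r + j) % (2 * k - 1) := rfl
      refine ⟨⟨by omega, by omega⟩, ?_⟩
      right
      have e : (g j).val + (2 * k - 1) - a.val = (r + j) % (2 * k - 1) + (2 * k - 1) - r := by
        rw [hgv]; omega
      refine ⟨?_, ?_⟩
      · rcases hbase with h | h
        · left; constructor <;> omega
        · right; constructor <;> omega
      · rw [e, I1 hn hrlt hjlt]
        omega
  rw [hset, Set.ncard_image_of_injOn hinj, ← Finset.coe_Icc, Set.ncard_coe_finset,
    Nat.card_Icc]
  omega

lemma deg_in (k : ℕ) (hk : 0 < k) (base : ℕ) (hbase : base = 0 ∨ base = 2 * k - 1)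
    (a : Fin (4 * k - 2)) (ha1 : base ≤ a.val) (ha2 : a.val < base + (2 * k - 1)) :
    {w : Fin (4 * k - 2) | (base ≤ w.val ∧ w.val < base + (2 * k - 1)) ∧ TT k w a}.ncard
      = k - 1 := by
  have hn : 0 < 2 * k - 1 := by omega
  have hbn : base + (2 * k - 1) ≤ 4 * k - 2 := by omega
  set r := a.val - base with hr0
  have hrlt : r < 2 * k - 1 := by omega
  have hg : ∀ j : ℕ, base + (r + (2 * k - 1) - j) % (2 * k - 1) < 4 * k - 2 := fun j => by
    have := Nat.mod_lt (r + (2 * k - 1) - j) hn; omega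
  set g : ℕ → Fin (4 * k - 2) := fun j => ⟨base + (r + (2 * k - 1) - j) % (2 * k - 1), hg j⟩
    with hgdef
  have hinj : Set.InjOn g (Set.Icc 1 (k - 1)) := by
    intro j hj j' hj' he
    simp only [Set.mem_Icc] at hj hj'
    have hee : (r + (2 * k - 1) - j) % (2 * k - 1) = (r + (2 * k - 1) - j') % (2 * k - 1) := by
      have := congrArg Fin.val he
      simp only [hgdef] at this
      omega
    have h1 := I4 hn hrlt (show j < 2 * k - 1 by omega)
    have h2 := I4 hn hrlt (show j' < 2 * k - 1 by omega)
    rw [hee] at h1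
    omega
  have hset : {w : Fin (4 * k - 2) | (base ≤ w.val ∧ w.val < base + (2 * k - 1)) ∧ TT k w a}
      = g '' Set.Icc 1 (k - 1) := by
    ext w
    simp only [Set.mem_setOf_eq, Set.mem_image, Set.mem_Icc]
    constructor
    · rintro ⟨⟨hw1, hw2⟩, hT⟩
      have hd : 1 ≤ (a.val + (2 * k - 1) - w.val) % (2 * k - 1) ∧
          (a.val + (2 * k - 1) - w.val) % (2 * k - 1) ≤ k - 1 := by
        rcases hT with ⟨h1, h2⟩ | ⟨_, hb⟩
        · exfalso; rcases hbase with h | h <;> omega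
        · exact hb
      refine ⟨(a.val + (2 * k - 1) - w.val) % (2 * k - 1), hd, ?_⟩
      apply Fin.ext
      show base + (r + (2 * k - 1) - (a.val + (2 * k - 1) - w.val) % (2 * k - 1)) % (2 * k - 1)
        = w.val
      have e : a.val + (2 * k - 1) - w.val = r + (2 * k - 1) - (w.val - base) := by omega
      rw [e, I4 hn hrlt (show w.val - base < 2 * k - 1 by omega)]
      omega
    · rintro ⟨j, ⟨hj1, hj2⟩, rfl⟩
      have hjlt : j < 2 * k - 1 := by omega
      have hmod := Nat.mod_lt (r + (2 * k - 1) - j) hn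
      have hgv : (g j).val = base + (r + (2 * k - 1) - j) % (2 * k - 1) := rfl
      refine ⟨⟨by omega, by omega⟩, ?_⟩
      right
      have e : a.val + (2 * k - 1) - (g j).val
          = r + (2 * k - 1) - (r + (2 * k - 1) - j) % (2 * k - 1) := by
        rw [hgv]; omega
      refine ⟨?_, ?_⟩
      · rcases hbase with h | h
        · left; constructor <;> omega
        · right; constructor <;> omega
      · rw [e, I4 hn hrlt hjlt]
        omega
  rw [hset, Set.ncard_image_of_injOn hinj, ← Finset.coe_Icc, Set.ncard_coe_finset,
    Nat.card_Icc]
  omega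


lemma card_lt_set (N m : ℕ) (h : m ≤ N) : {v : Fin N | v.val < m}.ncard = m := by
  have hinj : Function.Injective (fun i : Fin m => (⟨i.val, lt_of_lt_of_le i.isLt h⟩ : Fin N)) :=
    fun i j hij => Fin.ext (by simpa using congrArg Fin.val hij)
  have himg : {v : Fin N | v.val < m}
      = (fun i : Fin m => (⟨i.val, lt_of_lt_of_le i.isLt h⟩ : Fin N)) '' Set.univ := by
    ext v
    simp only [Set.mem_setOf_eq, Set.image_univ, Set.mem_range]
    constructor
    · intro hv; exact ⟨⟨v.val, hv⟩, Fin.ext rfl⟩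
    · rintro ⟨i, rfl⟩; exact i.isLt
  rw [himg, Set.ncard_image_of_injective _ hinj, Set.ncard_univ]
  simp

lemma card_ge_set (N m : ℕ) (h : m ≤ N) : {v : Fin N | m ≤ v.val}.ncard = N - m := by
  have hinj : Function.Injective
      (fun i : Fin (N - m) => (⟨m + i.val, by omega⟩ : Fin N)) :=
    fun i j hij => Fin.ext (by have := congrArg Fin.val hij; simpa using this)
  have himg : {v : Fin N | m ≤ v.val}
      = (fun i : Fin (N - m) => (⟨m + i.val, by omega⟩ : Fin N)) '' Set.univ := by
    ext v
    simp only [Set.mem_setOf_eq, Set.image_univ, Set.mem_range]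
    constructor
    · intro hv
      refine ⟨⟨v.val - m, by have := v.isLt; omega⟩, Fin.ext ?_⟩
      simp; omega
    · rintro ⟨i, rfl⟩; simp
  rw [himg, Set.ncard_image_of_injective _ hinj, Set.ncard_univ]
  simp

end Stmt18Aux


open Stmt18Aux

/-- There is a tournament `T` of order `4k-2`, with a vertex partition `(A, B)` where `T⟨A⟩`
and `T⟨B⟩` are eulerian tournaments of order `2k-1` and `A ⇒ B`, such that no single inversion
makes `T` `k`-arc-strong. -/
theorem stmt_18 (k : ℕ) (hk : 0 < k) :
    ∃ (T : Fin (4 * k - 2) → Fin (4 * k - 2) → Prop)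
      (A B : Set (Fin (4 * k - 2))),
      IsTournament T ∧
      A ∪ B = Set.univ ∧ Disjoint A B ∧
      A.ncard = 2 * k - 1 ∧ B.ncard = 2 * k - 1 ∧
      (∀ a ∈ A, {w ∈ A | T a w}.ncard = k - 1 ∧ {w ∈ A | T w a}.ncard = k - 1) ∧
      (∀ b ∈ B, {w ∈ B | T b w}.ncard = k - 1 ∧ {w ∈ B | T w b}.ncard = k - 1) ∧
      (∀ a ∈ A, ∀ b ∈ B, T a b) ∧
      ∀ X : Set (Fin (4 * k - 2)), ¬ kArcStrong (dinv T X) k := by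
  refine ⟨TT k, {v | v.val < 2 * k - 1}, {v | 2 * k - 1 ≤ v.val},
    ⟨TT_irrefl k, TT_total k hk⟩, ?_, ?_, ?_, ?_, ?_, ?_, ?_, ?_⟩
  · ext v; simp only [Set.mem_union, Set.mem_setOf_eq, Set.mem_univ, iff_true]; omega
  · rw [Set.disjoint_left]; intro v hv hv'
    simp only [Set.mem_setOf_eq] at hv hv'; omega
  · exact card_lt_set _ _ (by omega)
  · rw [card_ge_set _ _ (by omega)]; omega
  · -- degrees in A
    intro a ha
    have ha' : a.val < 2 * k - 1 := ha
    constructor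
    · have e : {w ∈ {v : Fin (4 * k - 2) | v.val < 2 * k - 1} | TT k a w}
          = {w : Fin (4 * k - 2) | (0 ≤ w.val ∧ w.val < 0 + (2 * k - 1)) ∧ TT k a w} := by
        ext w
        simp only [Set.mem_setOf_eq]
        constructor
        · rintro ⟨h1, h2⟩; exact ⟨⟨by omega, by omega⟩, h2⟩
        · rintro ⟨⟨_, h1⟩, h2⟩; exact ⟨by omega, h2⟩
      rw [e]; exact deg_out k hk 0 (Or.inl rfl) a (by omega) (by omega)
    · have e : {w ∈ {v : Fin (4 * k - 2) | v.val < 2 * k - 1} | TT k w a}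
          = {w : Fin (4 * k - 2) | (0 ≤ w.val ∧ w.val < 0 + (2 * k - 1)) ∧ TT k w a} := by
        ext w
        simp only [Set.mem_setOf_eq]
        constructor
        · rintro ⟨h1, h2⟩; exact ⟨⟨by omega, by omega⟩, h2⟩
        · rintro ⟨⟨_, h1⟩, h2⟩; exact ⟨by omega, h2⟩
      rw [e]; exact deg_in k hk 0 (Or.inl rfl) a (by omega) (by omega)
  · -- degrees in B
    intro b hb
    have hb' : 2 * k - 1 ≤ b.val := hb
    have hb2 : b.val < 4 * k - 2 := b.isLt
    constructor
    · have e : {w ∈ {v : Fin (4 * k - 2) | 2 * k - 1 ≤ v.val} | TT k b w}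
          = {w : Fin (4 * k - 2) | (2 * k - 1 ≤ w.val ∧ w.val < 2 * k - 1 + (2 * k - 1))
              ∧ TT k b w} := by
        ext w
        simp only [Set.mem_setOf_eq]
        constructor
        · rintro ⟨h1, h2⟩; exact ⟨⟨h1, by have := w.isLt; omega⟩, h2⟩
        · rintro ⟨⟨h1, _⟩, h2⟩; exact ⟨h1, h2⟩
      rw [e]; exact deg_out k hk (2 * k - 1) (Or.inr rfl) b hb' (by omega)
    · have e : {w ∈ {v : Fin (4 * k - 2) | 2 * k - 1 ≤ v.val} | TT k w b}
          = {w : Fin (4 * k - 2) | (2 * k - 1 ≤ w.val ∧ w.val < 2 * k - 1 + (2 * k - 1))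
              ∧ TT k w b} := by
        ext w
        simp only [Set.mem_setOf_eq]
        constructor
        · rintro ⟨h1, h2⟩; exact ⟨⟨h1, by have := w.isLt; omega⟩, h2⟩
        · rintro ⟨⟨h1, _⟩, h2⟩; exact ⟨h1, h2⟩
      rw [e]; exact deg_in k hk (2 * k - 1) (Or.inr rfl) b hb' (by omega)
  · intro a ha b hb; exact Or.inl ⟨ha, hb⟩
  · -- no single inversion works
    intro X hstrong
    by_cases hA : ∀ v : Fin (4 * k - 2), v.val < 2 * k - 1 → v ∈ X
    · by_cases hB : ∀ v : Fin (4 * k - 2), 2 * k - 1 ≤ v.val → v ∈ X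
      · -- X = univ : cut S = A has no outgoing arcs
        set S : Set (Fin (4 * k - 2)) := {v | v.val < 2 * k - 1} with hS
        have hSne : S.Nonempty := ⟨⟨0, by omega⟩, show (0 : ℕ) < 2 * k - 1 by omega⟩
        have hSnu : S ≠ Set.univ := by
          intro h
          have hm : (⟨2 * k - 1, by omega⟩ : Fin (4 * k - 2)) ∈ S := h ▸ Set.mem_univ _
          have : (2 * k - 1 : ℕ) < 2 * k - 1 := hm
          omega
        have hcut : {p : Fin (4 * k - 2) × Fin (4 * k - 2) |
            p.1 ∈ S ∧ p.2 ∉ S ∧ dinv (TT k) X p.1 p.2} = ∅ := by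
          ext ⟨u, v⟩
          simp only [Set.mem_setOf_eq, Set.mem_empty_iff_false, iff_false]
          rintro ⟨hu, hv, hd⟩
          have hu' : u.val < 2 * k - 1 := hu
          have hv' : 2 * k - 1 ≤ v.val := by
            by_contra hc; exact hv (by simpa [hS] using (by omega : v.val < 2 * k - 1))
          rcases hd with ⟨_, _, hT⟩ | ⟨hnx, _⟩
          · exact TT_noback k hv' hu' hT
          · exact hnx ⟨hA u hu', hB v hv'⟩
        have hzero : outCut (dinv (TT k) X) S = 0 := by
          unfold outCut; rw [hcut]; exact Set.ncard_empty _
        have := hstrong S hSne hSnu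
        omega
      · -- some y in B is outside X : its out-degree is k-1
        push_neg at hB
        obtain ⟨y, hy1, hy2⟩ := hB
        have hSnu : ({y} : Set (Fin (4 * k - 2))) ≠ Set.univ := by
          intro h
          have e0 : (⟨0, by omega⟩ : Fin (4 * k - 2)) ∈ ({y} : Set _) := h ▸ Set.mem_univ _
          have e1 : (⟨1, by omega⟩ : Fin (4 * k - 2)) ∈ ({y} : Set _) := h ▸ Set.mem_univ _
          simp only [Set.mem_singleton_iff] at e0 e1
          have := congrArg Fin.val (e0.trans e1.symm)
          simp at this
        have hcut : {p : Fin (4 * k - 2) × Fin (4 * k - 2) |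
            p.1 ∈ ({y} : Set _) ∧ p.2 ∉ ({y} : Set _) ∧ dinv (TT k) X p.1 p.2}
            = (Prod.mk y) '' {w : Fin (4 * k - 2) |
              (2 * k - 1 ≤ w.val ∧ w.val < 2 * k - 1 + (2 * k - 1)) ∧ TT k y w} := by
          ext ⟨u, v⟩
          simp only [Set.mem_setOf_eq, Set.mem_singleton_iff, Set.mem_image, Prod.mk.injEq]
          constructor
          · rintro ⟨rfl, hv, hd⟩
            have hT : TT k u v := by
              rcases hd with ⟨huX, _, _⟩ | ⟨_, h⟩
              · exact absurd huX hy2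
              · exact h
            have hside : 2 * k - 1 ≤ v.val := by
              rcases hT with ⟨h1, _⟩ | ⟨(⟨h1, _⟩ | ⟨_, h2⟩), _⟩
              · omega
              · omega
              · exact h2
            exact ⟨v, ⟨⟨hside, by have := v.isLt; omega⟩, hT⟩, rfl, rfl⟩
          · rintro ⟨w, ⟨⟨hw1, _⟩, hT⟩, rfl, rfl⟩
            refine ⟨rfl, ?_, Or.inr ⟨fun hc => hy2 hc.1, hT⟩⟩
            intro h
            rw [h] at hT
            exact TT_irrefl k y hT
        have hPinj : Function.Injective (Prod.mk y : Fin (4 * k - 2) → _) :=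
          fun a b h => congrArg Prod.snd h
        have hval : outCut (dinv (TT k) X) {y} = k - 1 := by
          unfold outCut
          rw [hcut, Set.ncard_image_of_injective _ hPinj]
          exact deg_out k hk (2 * k - 1) (Or.inr rfl) y hy1 (by have := y.isLt; omega)
        have := hstrong {y} ⟨y, rfl⟩ hSnu
        omega
    · -- some x in A is outside X : its in-degree is k-1
      push_neg at hA
      obtain ⟨x, hx1, hx2⟩ := hA
      have hSne : ({x}ᶜ : Set (Fin (4 * k - 2))).Nonempty := by
        rcases eq_or_ne x.val 0 with h | h
        · refine ⟨⟨1, by omega⟩, ?_⟩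
          simp only [Set.mem_compl_iff, Set.mem_singleton_iff]
          intro he
          have := congrArg Fin.val he
          simp only at this
          omega
        · refine ⟨⟨0, by omega⟩, ?_⟩
          simp only [Set.mem_compl_iff, Set.mem_singleton_iff]
          intro he
          have := congrArg Fin.val he
          simp only at this
          omega
      have hSnu : ({x}ᶜ : Set (Fin (4 * k - 2))) ≠ Set.univ := by
        intro h
        have : x ∈ ({x}ᶜ : Set (Fin (4 * k - 2))) := h ▸ Set.mem_univ _
        exact this rfl
      have hcut : {p : Fin (4 * k - 2) × Fin (4 * k - 2) |
          p.1 ∈ ({x}ᶜ : Set _) ∧ p.2 ∉ ({x}ᶜ : Set _) ∧ dinv (TT k) X p.1 p.2}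
          = (fun w => (w, x)) '' {w : Fin (4 * k - 2) |
            (0 ≤ w.val ∧ w.val < 0 + (2 * k - 1)) ∧ TT k w x} := by
        ext ⟨u, v⟩
        simp only [Set.mem_setOf_eq, Set.mem_compl_iff, Set.mem_singleton_iff, not_not,
          Set.mem_image, Prod.mk.injEq]
        constructor
        · rintro ⟨hu, rfl, hd⟩
          have hT : TT k u v := by
            rcases hd with ⟨_, hvX, _⟩ | ⟨_, h⟩
            · exact absurd hvX hx2
            · exact h
          have hside : u.val < 2 * k - 1 := by
            rcases hT with ⟨_, h2⟩ | ⟨(⟨h1, _⟩ | ⟨_, h2⟩), _⟩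
            · omega
            · exact h1
            · omega
          exact ⟨u, ⟨⟨by omega, by omega⟩, hT⟩, rfl, rfl⟩
        · rintro ⟨w, ⟨⟨_, hw2⟩, hT⟩, rfl, rfl⟩
          refine ⟨?_, rfl, Or.inr ⟨fun hc => hx2 hc.2, hT⟩⟩
          intro h
          rw [h] at hT
          exact TT_irrefl k x hT
      have hPinj : Function.Injective (fun w : Fin (4 * k - 2) => (w, x)) :=
        fun a b h => congrArg Prod.fst h
      have hval : outCut (dinv (TT k) X) {x}ᶜ = k - 1 := by
        unfold outCut
        rw [hcut, Set.ncard_image_of_injective _ hPinj]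
        exact deg_in k hk 0 (Or.inl rfl) x (by omega) (by omega)
      have := hstrong {x}ᶜ hSne hSnu
      omega
end
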